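/- arXiv:2011.09960 — 3 statements merged into one kernel-verified Lean document; each statement's English description precedes it below -/
import Mathlib

section
/- For every real θ ∈ [0,1], every real ε > 0, and every integer n ≥ 2, the classical supremum M_n^C(ε;J_θ) equals ((f_θ(e^ε,1) + f_θ(1,e^ε))/(n−1)) · max_{1 ≤ k ≤ ⌊n/2⌋} k(n−k)/(k·e^ε + n − k), where f_θ(α,β) = (α−β)²/((1−θ)α + θβ). -/
open scoped BigOperators Classical ComplexOrder
open Matrix

noncomputable section

/-- `p` is a probability vector in `ℝ^d`. -/
def IsProbVec {d : ℕ} (p : Fin d → ℝ) : Prop :=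
  (∀ k, 0 ≤ p k) ∧ ∑ k, p k = 1

/-- `(p i)_{i=1}^n` is an `ε`-differentially private `n`-tuple of probability vectors. -/
def IsDP {n d : ℕ} (ε : ℝ) (p : Fin n → Fin d → ℝ) : Prop :=
  (∀ i, IsProbVec (p i)) ∧ ∀ i j k, p i k ≤ Real.exp ε * p j k

/-- Classical RLD Fisher information `J_θ(p,q)`. -/
def Jc {d : ℕ} (θ : ℝ) (p q : Fin d → ℝ) : ℝ :=
  ∑ k, (q k - p k) ^ 2 / ((1 - θ) * p k + θ * q k)

/-- `ρ` is a density matrix on `ℂ^d`. -/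
def IsDensityMatrix {d : ℕ} (ρ : Matrix (Fin d) (Fin d) ℂ) : Prop :=
  ρ.PosSemidef ∧ ρ.trace = 1

/-- `(ρ i)_{i=1}^n` is a classical-quantum `ε`-differentially private `n`-tuple. -/
def IsCQDP {n d : ℕ} (ε : ℝ) (ρ : Fin n → Matrix (Fin d) (Fin d) ℂ) : Prop :=
  (∀ i, IsDensityMatrix (ρ i)) ∧ ∀ i j, (Real.exp ε • ρ j - ρ i).PosSemidef

/-- `(ρ i)_{i=1}^n` lies in the essentially classical set `EC_n(ε)`. -/
def InEC {n d : ℕ} (ε : ℝ) (ρ : Fin n → Matrix (Fin d) (Fin d) ℂ) : Prop :=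
  ∃ (m : ℕ) (p : Fin n → Fin m → ℝ) (σ : Fin m → Matrix (Fin d) (Fin d) ℂ),
    IsDP ε p ∧ (∀ k, IsDensityMatrix (σ k)) ∧ ∀ i, ρ i = ∑ k, (p i k : ℂ) • σ k

/-- Quantum RLD Fisher information `J_θ(ρ,σ) = Tr((σ−ρ)²((1−θ)ρ+θσ)⁻¹)`. -/
def Jq {d : ℕ} (θ : ℝ) (ρ σ : Matrix (Fin d) (Fin d) ℂ) : ℝ :=
  (((σ - ρ) ^ 2 * ((1 - θ : ℂ) • ρ + (θ : ℂ) • σ)⁻¹).trace).re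

/-- The function `f_θ(α,β) = (α−β)²/((1−θ)α+θβ)`. -/
def fTheta (θ α β : ℝ) : ℝ := (α - β) ^ 2 / ((1 - θ) * α + θ * β)

/-- `min_{i≠j} J_θ(p_i,p_j)` (classical). -/
def minPairsC {n d : ℕ} (θ : ℝ) (p : Fin n → Fin d → ℝ) : ℝ :=
  ⨅ ij : {q : Fin n × Fin n // q.1 ≠ q.2}, Jc θ (p ij.val.1) (p ij.val.2)

/-- `min_{i≠j} J_θ(ρ_i,ρ_j)` (quantum). -/
def minPairsQ {n d : ℕ} (θ : ℝ) (ρ : Fin n → Matrix (Fin d) (Fin d) ℂ) : ℝ :=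
  ⨅ ij : {q : Fin n × Fin n // q.1 ≠ q.2}, Jq θ (ρ ij.val.1) (ρ ij.val.2)

/-- `avg_{i≠j} J_θ(p_i,p_j)` (classical): arithmetic mean over ordered pairs `i ≠ j`. -/
def avgPairsC {n d : ℕ} (θ : ℝ) (p : Fin n → Fin d → ℝ) : ℝ :=
  (∑ i, ∑ j, if i ≠ j then Jc θ (p i) (p j) else 0) / ((n : ℝ) * ((n : ℝ) - 1))

/-- `avg_{i≠j} J_θ(ρ_i,ρ_j)` (quantum): arithmetic mean over ordered pairs `i ≠ j`. -/
def avgPairsQ {n d : ℕ} (θ : ℝ) (ρ : Fin n → Matrix (Fin d) (Fin d) ℂ) : ℝ :=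
  (∑ i, ∑ j, if i ≠ j then Jq θ (ρ i) (ρ j) else 0) / ((n : ℝ) * ((n : ℝ) - 1))

/-- `M_n^C(ε;J_θ)`: supremum of `min_{i≠j} J_θ(p_i,p_j)` over `ε`-DP `n`-tuples with
positive entries, over all dimensions `d`. -/
def MC (n : ℕ) (ε θ : ℝ) : ℝ :=
  sSup {x : ℝ | ∃ (d : ℕ) (p : Fin n → Fin d → ℝ),
    IsDP ε p ∧ (∀ i k, 0 < p i k) ∧ x = minPairsC θ p}

/-- `M_n^EC(ε;J_θ)`: supremum of `min_{i≠j} J_θ(ρ_i,ρ_j)` over full-rank `n`-tuples in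
`EC_n(ε)`, over all dimensions `d`. -/
def MEC (n : ℕ) (ε θ : ℝ) : ℝ :=
  sSup {x : ℝ | ∃ (d : ℕ) (ρ : Fin n → Matrix (Fin d) (Fin d) ℂ),
    InEC ε ρ ∧ (∀ i, (ρ i).PosDef) ∧ x = minPairsQ θ ρ}

/-- `M_n^CQ(ε;J_θ)`: supremum of `min_{i≠j} J_θ(ρ_i,ρ_j)` over full-rank CQ `ε`-DP
`n`-tuples, over all dimensions `d`. -/
def MCQ (n : ℕ) (ε θ : ℝ) : ℝ :=
  sSup {x : ℝ | ∃ (d : ℕ) (ρ : Fin n → Matrix (Fin d) (Fin d) ℂ),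
    IsCQDP ε ρ ∧ (∀ i, (ρ i).PosDef) ∧ x = minPairsQ θ ρ}

/-- `M_2^C(ε;J_θ)` as the supremum of `J_θ(p,q)` over `ε`-DP pairs with positive entries. -/
def M2C (ε θ : ℝ) : ℝ :=
  sSup {x : ℝ | ∃ (d : ℕ) (p q : Fin d → ℝ),
    IsProbVec p ∧ IsProbVec q ∧ (∀ k, 0 < p k) ∧ (∀ k, 0 < q k) ∧
    (∀ k, p k ≤ Real.exp ε * q k ∧ q k ≤ Real.exp ε * p k) ∧
    x = Jc θ p q}

/-- `max_{1 ≤ k ≤ n/2} k(n−k)/(k e^ε + n − k)`. -/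
def maxK (n : ℕ) (ε : ℝ) : ℝ :=
  sSup {x : ℝ | ∃ k : ℕ, 1 ≤ k ∧ 2 * k ≤ n ∧
    x = ((k : ℝ) * ((n : ℝ) - (k : ℝ))) / ((k : ℝ) * Real.exp ε + (n : ℝ) - (k : ℝ))}


open Finset

lemma combo_pos {θ a b : ℝ} (hθ : θ ∈ Set.Icc (0:ℝ) 1) (ha : 0 < a) (hb : 0 < b) :
    0 < (1 - θ) * a + θ * b := by
  rcases le_total a b with h | h
  · nlinarith [hθ.1, hθ.2]
  · nlinarith [hθ.1, hθ.2]

lemma fTheta_nonneg {θ a b : ℝ} (hθ : θ ∈ Set.Icc (0:ℝ) 1) (ha : 0 < a) (hb : 0 < b) :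
    0 ≤ fTheta θ a b :=
  div_nonneg (sq_nonneg _) (combo_pos hθ ha hb).le

lemma fTheta_self (θ a : ℝ) : fTheta θ a a = 0 := by simp [fTheta]

lemma fTheta_mul_left {θ t v : ℝ} (hθ : θ ∈ Set.Icc (0:ℝ) 1) (ht : 0 < t) (hv : 0 < v) :
    fTheta θ (t * v) v = v * fTheta θ t 1 := by
  have h1 : 0 < (1 - θ) * t + θ * 1 := combo_pos hθ ht one_pos
  have h2 : 0 < (1 - θ) * (t * v) + θ * v := combo_pos hθ (by positivity) hv
  unfold fTheta
  rw [← mul_div_assoc, div_eq_div_iff h2.ne' (by positivity)]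
  ring

lemma fTheta_mul_right {θ t v : ℝ} (hθ : θ ∈ Set.Icc (0:ℝ) 1) (ht : 0 < t) (hv : 0 < v) :
    fTheta θ v (t * v) = v * fTheta θ 1 t := by
  have h1 : 0 < (1 - θ) * 1 + θ * t := combo_pos hθ one_pos ht
  have h2 : 0 < (1 - θ) * v + θ * (t * v) := combo_pos hθ hv (by positivity)
  unfold fTheta
  rw [← mul_div_assoc, div_eq_div_iff h2.ne' (by positivity)]
  ring

/-- Key pairwise bound. -/
lemma fTheta_le {θ t a b : ℝ} (hθ : θ ∈ Set.Icc (0:ℝ) 1) (ht : 1 < t)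
    (ha : 0 < a) (hb : 0 < b) (hab : a ≤ t * b) (hba : b ≤ t * a) :
    fTheta θ a b ≤ (fTheta θ t 1 * max (a - b) 0 + fTheta θ 1 t * max (b - a) 0) / (t - 1) := by
  have hθ0 := hθ.1; have hθ1 := hθ.2
  have ht0 : (0:ℝ) < t := by linarith
  have hD1 : 0 < (1 - θ) * t + θ * 1 := combo_pos hθ ht0 one_pos
  have hD2 : 0 < (1 - θ) * 1 + θ * t := combo_pos hθ one_pos ht0
  have hDab : 0 < (1 - θ) * a + θ * b := combo_pos hθ ha hb
  have ht1 : 0 < t - 1 := by linarith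
  rcases le_total b a with h | h
  · have hm1 : max (a - b) 0 = a - b := max_eq_left (by linarith)
    have hm2 : max (b - a) 0 = 0 := max_eq_right (by linarith)
    rw [hm1, hm2, mul_zero, add_zero]
    unfold fTheta
    have hrw : (t - 1) ^ 2 / ((1 - θ) * t + θ * 1) * (a - b) / (t - 1)
        = ((t - 1) * (a - b)) / ((1 - θ) * t + θ * 1) := by
      rw [div_mul_eq_mul_div, div_div, div_eq_div_iff (by positivity) hD1.ne']
      ring
    rw [hrw, div_le_div_iff₀ hDab hD1]
    nlinarith [mul_nonneg (sub_nonneg.2 h) (sub_nonneg.2 hab)]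
  · have hm1 : max (a - b) 0 = 0 := max_eq_right (by linarith)
    have hm2 : max (b - a) 0 = b - a := max_eq_left (by linarith)
    rw [hm1, hm2, mul_zero, zero_add]
    unfold fTheta
    have hrw : (1 - t) ^ 2 / ((1 - θ) * 1 + θ * t) * (b - a) / (t - 1)
        = ((t - 1) * (b - a)) / ((1 - θ) * 1 + θ * t) := by
      rw [div_mul_eq_mul_div, div_div, div_eq_div_iff (by positivity) hD2.ne']
      ring
    rw [hrw, div_le_div_iff₀ hDab hD2]
    nlinarith [mul_nonneg (sub_nonneg.2 h) (sub_nonneg.2 hba)]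
noncomputable section

/-- swap lemma -/
lemma swapLemma (N : ℕ) (g : ℕ → ℝ) :
    ∑ i ∈ range N, ∑ j ∈ range i, g j = ∑ j ∈ range N, ((N : ℝ) - 1 - j) * g j := by
  induction N with
  | zero => simp
  | succ N ih =>
      rw [Finset.sum_range_succ, ih, Finset.sum_range_succ]
      push_cast
      rw [← Finset.sum_add_distrib]
      rw [show ((N:ℝ) + 1 - 1 - N) * g N = 0 by ring, add_zero]
      apply Finset.sum_congr rfl
      intro j hj
      ring

lemma inner_tel (A : ℕ → ℝ) (i : ℕ) :
    ∑ j ∈ range (i + 1), (A i - A j) = ∑ m ∈ range i, ((m : ℝ) + 1) * (A (m + 1) - A m) := by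
  induction i with
  | zero => simp
  | succ i ih =>
      rw [Finset.sum_range_succ (f := fun m => ((m:ℝ)+1) * (A (m+1) - A m)), ← ih]
      rw [Finset.sum_range_succ]
      have h1 : ∑ j ∈ range (i + 1), (A (i + 1) - A j)
          = ∑ j ∈ range (i + 1), ((A i - A j) + (A (i+1) - A i)) := by
        apply Finset.sum_congr rfl; intro j hj; ring
      rw [h1, Finset.sum_add_distrib, Finset.sum_const, Finset.card_range]
      push_cast
      ring

/-- Sorted key bound. -/
lemma key_sorted (n : ℕ) (hn : 2 ≤ n) (t M : ℝ) (ht : 1 < t) (hM : 0 ≤ M)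
    (hMk : ∀ k : ℕ, 1 ≤ k → k < n → (k : ℝ) * ((n : ℝ) - k) ≤ M * ((k : ℝ) * t + ((n : ℝ) - k)))
    (A : ℕ → ℝ) (hpos : ∀ i < n, 0 < A i)
    (hmono : ∀ i j, i ≤ j → j < n → A i ≤ A j)
    (hratio : A (n - 1) ≤ t * A 0) :
    ∑ i ∈ range n, ∑ j ∈ range n, max (A i - A j) 0
      ≤ (t - 1) * M * ∑ i ∈ range n, A i := by
  set D : ℕ → ℝ := fun m => A (m + 1) - A m with hD
  -- identity for the double sum
  have hmax : ∀ i ∈ range n, ∑ j ∈ range n, max (A i - A j) 0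
      = ∑ j ∈ range (i + 1), (A i - A j) := by
    intro i hi
    rw [Finset.mem_range] at hi
    have hfil : ∑ j ∈ range n, max (A i - A j) 0
        = ∑ j ∈ range n, if j ≤ i then A i - A j else 0 := by
      apply Finset.sum_congr rfl
      intro j hj
      rw [Finset.mem_range] at hj
      by_cases h : j ≤ i
      · rw [if_pos h, max_eq_left (sub_nonneg.2 (hmono j i h hi))]
      · push_neg at h
        rw [if_neg (by omega), max_eq_right (sub_nonpos.2 (hmono i j h.le hj))]
    rw [hfil, Finset.sum_ite, Finset.sum_const_zero, add_zero]
    apply Finset.sum_congr _ (fun _ _ => rfl)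
    ext j
    simp only [Finset.mem_filter, Finset.mem_range]
    omega
  have hT : ∑ i ∈ range n, ∑ j ∈ range n, max (A i - A j) 0
      = ∑ m ∈ range n, ((n : ℝ) - 1 - m) * (((m : ℝ) + 1) * D m) := by
    rw [Finset.sum_congr rfl hmax]
    rw [Finset.sum_congr rfl (fun i _ => inner_tel A i)]
    exact swapLemma n (fun m => ((m : ℝ) + 1) * D m)
  have hS : ∑ i ∈ range n, A i = n * A 0 + ∑ m ∈ range n, ((n : ℝ) - 1 - m) * D m := by
    have h1 : ∀ i ∈ range n, A i = A 0 + ∑ m ∈ range i, D m := by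
      intro i _
      rw [Finset.sum_range_sub A i]
      ring
    rw [Finset.sum_congr rfl h1, Finset.sum_add_distrib, Finset.sum_const, Finset.card_range,
      swapLemma n D, nsmul_eq_mul]
  -- drop the last (zero-coefficient) term: sums over range (n-1)
  obtain ⟨n', rfl⟩ : ∃ n', n = n' + 1 := ⟨n - 1, by omega⟩
  have hzero : ((n' + 1 : ℕ) : ℝ) - 1 - n' = 0 := by push_cast; ring
  have hT' : ∑ m ∈ range (n' + 1), (((n' + 1 : ℕ) : ℝ) - 1 - m) * (((m : ℝ) + 1) * D m)
      = ∑ m ∈ range n', (((n' + 1 : ℕ) : ℝ) - 1 - m) * (((m : ℝ) + 1) * D m) := by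
    rw [Finset.sum_range_succ, hzero, zero_mul, add_zero]
  have hS' : ∑ m ∈ range (n' + 1), (((n' + 1 : ℕ) : ℝ) - 1 - m) * D m
      = ∑ m ∈ range n', (((n' + 1 : ℕ) : ℝ) - 1 - m) * D m := by
    rw [Finset.sum_range_succ, hzero, zero_mul, add_zero]
  rw [hT'] at hT
  rw [hS'] at hS
  simp only [Nat.add_sub_cancel] at hratio
  rw [hT, hS]
  have hDnn : ∀ m ∈ range n', 0 ≤ D m := by
    intro m hm
    rw [Finset.mem_range] at hm
    exact sub_nonneg.2 (hmono m (m + 1) (Nat.le_succ m) (by omega))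
  have step1 : ∑ m ∈ range n', (((n' + 1 : ℕ) : ℝ) - 1 - m) * (((m : ℝ) + 1) * D m)
      ≤ ∑ m ∈ range n',
        ((t - 1) * M * ((((n' + 1 : ℕ) : ℝ) - 1 - m) * D m) + M * ((n' : ℝ) + 1) * D m) := by
    apply Finset.sum_le_sum
    intro m hm
    have hmn : m < n' := Finset.mem_range.1 hm
    have hk := hMk (n' - m) (by omega) (by omega)
    have hc : ((n' - m : ℕ) : ℝ) = (n' : ℝ) - m := by
      rw [Nat.cast_sub hmn.le]
    rw [hc] at hk
    have hcast : (((n' + 1 : ℕ) : ℕ) : ℝ) = (n' : ℝ) + 1 := by push_cast; ring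
    rw [hcast] at hk
    have hD0 := hDnn m hm
    push_cast
    nlinarith [mul_le_mul_of_nonneg_right hk hD0]
  have hsumD : ∑ m ∈ range n', D m = A n' - A 0 := Finset.sum_range_sub A n'
  have hlast : ∑ m ∈ range n',
        ((t - 1) * M * ((((n' + 1 : ℕ) : ℝ) - 1 - m) * D m) + M * ((n' : ℝ) + 1) * D m)
      = (t - 1) * M * (∑ m ∈ range n', (((n' + 1 : ℕ) : ℝ) - 1 - m) * D m)
        + M * ((n' : ℝ) + 1) * (A n' - A 0) := by
    rw [Finset.sum_add_distrib, ← Finset.mul_sum, ← Finset.mul_sum, hsumD]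
  have hA0 : 0 < A 0 := hpos 0 (by omega)
  have hfin : M * ((n' : ℝ) + 1) * (A n' - A 0) ≤ (t - 1) * M * (((n' + 1 : ℕ) : ℝ) * A 0) := by
    have h1 : A n' - A 0 ≤ (t - 1) * A 0 := by linarith
    have h2 : 0 ≤ M * ((n' : ℝ) + 1) := by positivity
    push_cast
    nlinarith [mul_le_mul_of_nonneg_left h1 h2]
  calc ∑ m ∈ range n', (((n' + 1 : ℕ) : ℝ) - 1 - m) * (((m : ℝ) + 1) * D m)
      ≤ (t - 1) * M * (∑ m ∈ range n', (((n' + 1 : ℕ) : ℝ) - 1 - m) * D m)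
        + M * ((n' : ℝ) + 1) * (A n' - A 0) := by rw [← hlast]; exact step1
    _ ≤ (t - 1) * M * (((n' + 1 : ℕ) : ℝ) * A 0)
        + (t - 1) * M * (∑ m ∈ range n', (((n' + 1 : ℕ) : ℝ) - 1 - m) * D m) := by
        linarith [hfin]
    _ = (t - 1) * M * (((n' + 1 : ℕ) : ℝ) * A 0
          + ∑ m ∈ range n', (((n' + 1 : ℕ) : ℝ) - 1 - m) * D m) := by ring


/-- Per-coordinate bound (sort-free). -/
lemma coord_bound (n : ℕ) (hn : 2 ≤ n) (θ t M : ℝ) (hθ : θ ∈ Set.Icc (0:ℝ) 1)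
    (ht : 1 < t) (hM : 0 ≤ M)
    (hMk : ∀ k : ℕ, 1 ≤ k → k < n → (k : ℝ) * ((n : ℝ) - k) ≤ M * ((k : ℝ) * t + ((n : ℝ) - k)))
    (a : Fin n → ℝ) (hpos : ∀ i, 0 < a i) (hrat : ∀ i j, a i ≤ t * a j) :
    ∑ i, ∑ j, fTheta θ (a i) (a j)
      ≤ (fTheta θ t 1 + fTheta θ 1 t) * M * ∑ i, a i := by
  have ht1 : (0:ℝ) < t - 1 := by linarith
  have ht0 : (0:ℝ) < t := by linarith
  set F1 := fTheta θ t 1 with hF1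
  set F2 := fTheta θ 1 t with hF2
  have hF1nn : 0 ≤ F1 := fTheta_nonneg hθ ht0 one_pos
  have hF2nn : 0 ≤ F2 := fTheta_nonneg hθ one_pos ht0
  -- the T₀ bound via sorting
  have hT0 : ∑ i, ∑ j, max (a i - a j) 0 ≤ (t - 1) * M * ∑ i, a i := by
    set σ := Tuple.sort a with hσ
    have hbmono : Monotone (a ∘ σ) := Tuple.monotone_sort a
    set A : ℕ → ℝ := fun i => if h : i < n then a (σ ⟨i, h⟩) else 0 with hA
    have hAval : ∀ (i : ℕ) (h : i < n), A i = a (σ ⟨i, h⟩) := by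
      intro i h; simp only [hA, dif_pos h]
    have key := key_sorted n hn t M ht hM hMk A
      (by intro i h; rw [hAval i h]; exact hpos _)
      (by
        intro i j hij hj
        rw [hAval i (lt_of_le_of_lt hij hj), hAval j hj]
        exact hbmono (by exact hij))
      (by
        rw [hAval (n-1) (by omega), hAval 0 (by omega)]
        exact hrat _ _)
    have e1 : ∑ i ∈ range n, ∑ j ∈ range n, max (A i - A j) 0
        = ∑ i, ∑ j, max (a i - a j) 0 := by
      rw [← Fin.sum_univ_eq_sum_range (fun i => ∑ j ∈ range n, max (A i - A j) 0) n]
      rw [← Equiv.sum_comp σ (fun i => ∑ j, max (a i - a j) 0)]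
      apply Finset.sum_congr rfl
      intro i _
      rw [← Fin.sum_univ_eq_sum_range (fun j => max (A i.val - A j) 0) n]
      rw [← Equiv.sum_comp σ (fun j => max (a (σ i) - a j) 0)]
      apply Finset.sum_congr rfl
      intro j _
      rw [hAval i.val i.isLt, hAval j.val j.isLt]
    have e2 : ∑ i ∈ range n, A i = ∑ i, a i := by
      rw [← Fin.sum_univ_eq_sum_range A n, ← Equiv.sum_comp σ a]
      apply Finset.sum_congr rfl
      intro i _
      rw [hAval i.val i.isLt]
    rw [e1, e2] at key
    exact key
  have step1 : ∑ i, ∑ j, fTheta θ (a i) (a j)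
      ≤ ∑ i, ∑ j, ((F1 * max (a i - a j) 0 + F2 * max (a j - a i) 0) / (t - 1)) := by
    apply Finset.sum_le_sum; intro i _
    apply Finset.sum_le_sum; intro j _
    exact fTheta_le hθ ht (hpos i) (hpos j) (hrat i j) (hrat j i)
  have step2 : ∑ i, ∑ j, ((F1 * max (a i - a j) 0 + F2 * max (a j - a i) 0) / (t - 1))
      = (F1 + F2) * (∑ i, ∑ j, max (a i - a j) 0) / (t - 1) := by
    simp only [← Finset.sum_div]
    congr 1
    simp only [Finset.sum_add_distrib, ← Finset.mul_sum]
    rw [Finset.sum_comm (f := fun i j => max (a j - a i) 0)]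
    ring
  have hT0nn : 0 ≤ ∑ i, ∑ j, max (a i - a j) 0 := by
    apply Finset.sum_nonneg; intro i _
    apply Finset.sum_nonneg; intro j _
    exact le_max_right _ _
  calc ∑ i, ∑ j, fTheta θ (a i) (a j)
      ≤ (F1 + F2) * (∑ i, ∑ j, max (a i - a j) 0) / (t - 1) := by rw [← step2]; exact step1
    _ ≤ (F1 + F2) * ((t - 1) * M * ∑ i, a i) / (t - 1) := by
        apply (div_le_div_iff_of_pos_right ht1).mpr
        exact mul_le_mul_of_nonneg_left hT0 (add_nonneg hF1nn hF2nn)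
    _ = (F1 + F2) * M * ∑ i, a i := by field_simp

lemma Jc_eq {d : ℕ} (θ : ℝ) (x y : Fin d → ℝ) : Jc θ x y = ∑ k, fTheta θ (x k) (y k) := by
  unfold Jc fTheta
  apply Finset.sum_congr rfl
  intro k _
  congr 1
  ring

section MaxK

variable (n : ℕ) (ε : ℝ)

lemma maxK_set_eq : {x : ℝ | ∃ k : ℕ, 1 ≤ k ∧ 2 * k ≤ n ∧
    x = ((k : ℝ) * ((n : ℝ) - (k : ℝ))) / ((k : ℝ) * Real.exp ε + (n : ℝ) - (k : ℝ))}
    = (fun k : ℕ => ((k : ℝ) * ((n : ℝ) - (k : ℝ))) / ((k : ℝ) * Real.exp ε + (n : ℝ) - (k : ℝ)))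
      '' {k : ℕ | 1 ≤ k ∧ 2 * k ≤ n} := by
  ext x
  constructor
  · rintro ⟨k, h1, h2, rfl⟩; exact ⟨k, ⟨h1, h2⟩, rfl⟩
  · rintro ⟨k, ⟨h1, h2⟩, rfl⟩; exact ⟨k, h1, h2, rfl⟩

lemma maxK_set_finite : {x : ℝ | ∃ k : ℕ, 1 ≤ k ∧ 2 * k ≤ n ∧
    x = ((k : ℝ) * ((n : ℝ) - (k : ℝ))) / ((k : ℝ) * Real.exp ε + (n : ℝ) - (k : ℝ))}.Finite := by
  rw [maxK_set_eq]
  apply Set.Finite.image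
  apply Set.Finite.subset (Set.finite_Iic n)
  rintro k ⟨h1, h2⟩
  exact Set.mem_Iic.2 (by omega)

lemma maxK_set_nonempty (hn : 2 ≤ n) : {x : ℝ | ∃ k : ℕ, 1 ≤ k ∧ 2 * k ≤ n ∧
    x = ((k : ℝ) * ((n : ℝ) - (k : ℝ))) / ((k : ℝ) * Real.exp ε + (n : ℝ) - (k : ℝ))}.Nonempty :=
  ⟨_, ⟨1, le_refl 1, by omega, rfl⟩⟩

lemma maxK_mem (hn : 2 ≤ n) : ∃ k : ℕ, 1 ≤ k ∧ 2 * k ≤ n ∧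
    maxK n ε = ((k : ℝ) * ((n : ℝ) - (k : ℝ))) / ((k : ℝ) * Real.exp ε + (n : ℝ) - (k : ℝ)) :=
  (maxK_set_nonempty n ε hn).csSup_mem (maxK_set_finite n ε)

lemma maxK_den_pos (hε : 0 < ε) {k : ℕ} (hk1 : 1 ≤ k) (hkn : k < n) :
    0 < (k : ℝ) * Real.exp ε + (n : ℝ) - (k : ℝ) := by
  have h1 : (1:ℝ) < Real.exp ε := Real.one_lt_exp_iff.2 hε
  have h2 : (k:ℝ) ≤ (n:ℝ) := by exact_mod_cast hkn.le
  have h3 : (1:ℝ) ≤ (k:ℝ) := by exact_mod_cast hk1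
  nlinarith

lemma maxK_nonneg (hε : 0 < ε) (hn : 2 ≤ n) : 0 ≤ maxK n ε := by
  obtain ⟨k, hk1, hk2, hEq⟩ := maxK_mem n ε hn
  rw [hEq]
  have hden := maxK_den_pos n ε hε hk1 (by omega)
  have h2 : (k:ℝ) ≤ (n:ℝ) := by exact_mod_cast (by omega : k ≤ n)
  apply div_nonneg _ hden.le
  have h3 : (0:ℝ) ≤ (k:ℝ) := by positivity
  nlinarith

lemma maxK_ge (hε : 0 < ε) (hn : 2 ≤ n) {k : ℕ} (hk1 : 1 ≤ k) (hk2 : 2 * k ≤ n) :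
    ((k : ℝ) * ((n : ℝ) - (k : ℝ))) / ((k : ℝ) * Real.exp ε + (n : ℝ) - (k : ℝ)) ≤ maxK n ε :=
  le_csSup ((maxK_set_finite n ε).bddAbove) ⟨k, hk1, hk2, rfl⟩

/-- The key comparison: for all `1 ≤ k < n`. -/
lemma maxK_key (hε : 0 < ε) (hn : 2 ≤ n) {k : ℕ} (hk1 : 1 ≤ k) (hkn : k < n) :
    (k : ℝ) * ((n : ℝ) - (k : ℝ))
      ≤ maxK n ε * ((k : ℝ) * Real.exp ε + ((n : ℝ) - (k : ℝ))) := by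
  have ht : (1:ℝ) < Real.exp ε := Real.one_lt_exp_iff.2 hε
  rcases le_or_gt (2 * k) n with h | h
  · have := maxK_ge n ε hε hn hk1 h
    have hden := maxK_den_pos n ε hε hk1 hkn
    rw [div_le_iff₀ hden] at this
    nlinarith [maxK_nonneg n ε hε hn]
  · -- use k' = n - k
    set k' : ℕ := n - k with hk'
    have hk'1 : 1 ≤ k' := by omega
    have hk'2 : 2 * k' ≤ n := by omega
    have hcast : (k' : ℝ) = (n : ℝ) - (k : ℝ) := by
      rw [hk']; push_cast [Nat.cast_sub hkn.le]; ring
    have hge := maxK_ge n ε hε hn hk'1 hk'2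
    have hden' := maxK_den_pos n ε hε hk'1 (by omega)
    rw [div_le_iff₀ hden'] at hge
    rw [hcast] at hge
    have hM0 := maxK_nonneg n ε hε hn
    have h2k : (n:ℝ) < 2 * k := by exact_mod_cast h
    have hkR : (1:ℝ) ≤ (k:ℝ) := by exact_mod_cast hk1
    have hknR : (k:ℝ) < (n:ℝ) := by exact_mod_cast hkn
    -- hge : (n-k)*(n-(n-k)) ≤ M * ((n-k)*t + n - (n-k))
    have hge' : ((n:ℝ) - k) * (k:ℝ) ≤ maxK n ε * (((n:ℝ) - k) * Real.exp ε + (k:ℝ)) := by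
      have : (n:ℝ) - ((n:ℝ) - (k:ℝ)) = (k:ℝ) := by ring
      nlinarith [hge]
    nlinarith [mul_le_mul_of_nonneg_left (show ((n:ℝ)-k) * Real.exp ε + (k:ℝ) ≤ (k:ℝ) * Real.exp ε + ((n:ℝ) - k) by nlinarith) hM0]

end MaxK

lemma mc_upper (θ ε : ℝ) (hθ : θ ∈ Set.Icc (0:ℝ) 1) (hε : 0 < ε)
    (n : ℕ) (hn : 2 ≤ n) (d : ℕ) (p : Fin n → Fin d → ℝ)
    (hDP : IsDP ε p) (hpos : ∀ i k, 0 < p i k) :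
    minPairsC θ p
      ≤ (fTheta θ (Real.exp ε) 1 + fTheta θ 1 (Real.exp ε)) / ((n : ℝ) - 1) * maxK n ε := by
  set t := Real.exp ε with htdef
  have ht : (1:ℝ) < t := Real.one_lt_exp_iff.2 hε
  set M := maxK n ε with hMdef
  have hM0 : 0 ≤ M := maxK_nonneg n ε hε hn
  set Φ := fTheta θ t 1 + fTheta θ 1 t with hΦdef
  have hΦ0 : 0 ≤ Φ := add_nonneg (fTheta_nonneg hθ (by linarith) one_pos)
    (fTheta_nonneg hθ one_pos (by linarith))
  have hn1 : (0:ℝ) < (n:ℝ) - 1 := by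
    have : (2:ℝ) ≤ (n:ℝ) := by exact_mod_cast hn
    linarith
  set T := Φ / ((n : ℝ) - 1) * M with hTdef
  have hMk : ∀ k : ℕ, 1 ≤ k → k < n → (k : ℝ) * ((n : ℝ) - k) ≤ M * ((k : ℝ) * t + ((n : ℝ) - k)) :=
    fun k h1 h2 => maxK_key n ε hε hn h1 h2
  -- total sum estimate
  have hsum : ∑ q ∈ Finset.univ.offDiag, Jc θ (p q.1) (p q.2) ≤ (n : ℝ) * (Φ * M) := by
    have hJnn : ∀ q : Fin n × Fin n, 0 ≤ Jc θ (p q.1) (p q.2) := by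
      intro q
      rw [Jc_eq]
      exact Finset.sum_nonneg fun k _ => fTheta_nonneg hθ (hpos _ _) (hpos _ _)
    have hsub : (Finset.univ : Finset (Fin n)).offDiag ⊆ Finset.univ ×ˢ Finset.univ := by
      intro q hq
      rw [Finset.mem_offDiag] at hq
      exact Finset.mem_product.2 ⟨hq.1, hq.2.1⟩
    calc ∑ q ∈ Finset.univ.offDiag, Jc θ (p q.1) (p q.2)
        ≤ ∑ q ∈ Finset.univ ×ˢ Finset.univ, Jc θ (p q.1) (p q.2) :=
          Finset.sum_le_sum_of_subset_of_nonneg hsub (fun q _ _ => hJnn q)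
      _ = ∑ i, ∑ j, Jc θ (p i) (p j) := Finset.sum_product _ _ _
      _ = ∑ k, ∑ i, ∑ j, fTheta θ (p i k) (p j k) := by
          rw [Finset.sum_congr rfl (fun i _ => Finset.sum_congr rfl (fun j _ => Jc_eq θ (p i) (p j)))]
          rw [Finset.sum_congr rfl (fun i (_ : i ∈ Finset.univ) =>
            Finset.sum_comm (s := Finset.univ) (t := Finset.univ)
              (f := fun j k => fTheta θ (p i k) (p j k)))]
          exact Finset.sum_comm
      _ ≤ ∑ k : Fin d, Φ * M * ∑ i, p i k := by
          apply Finset.sum_le_sum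
          intro k _
          exact coord_bound n hn θ t M hθ ht hM0 hMk (fun i => p i k)
            (fun i => hpos i k) (fun i j => hDP.2 i j k)
      _ = Φ * M * ∑ i : Fin n, ∑ k, p i k := by
          rw [← Finset.mul_sum]
          congr 1
          exact Finset.sum_comm
      _ = (n : ℝ) * (Φ * M) := by
          rw [Finset.sum_congr rfl (fun i (_ : i ∈ Finset.univ) => (hDP.1 i).2)]
          simp [mul_comm]
  -- existence of a good pair
  have i0 : Fin n := ⟨0, by omega⟩
  have i1 : Fin n := ⟨1, by omega⟩
  have hne : (⟨0, by omega⟩ : Fin n) ≠ (⟨1, by omega⟩ : Fin n) := by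
    intro h
    have := congrArg Fin.val h
    simp at this
  have hpair : ∃ q : Fin n × Fin n, q.1 ≠ q.2 ∧ Jc θ (p q.1) (p q.2) ≤ T := by
    by_contra hcon
    push_neg at hcon
    have hlt : ∀ q ∈ (Finset.univ : Finset (Fin n)).offDiag, T < Jc θ (p q.1) (p q.2) := by
      intro q hq
      exact hcon q (Finset.mem_offDiag.1 hq).2.2
    have hnonempty : ((Finset.univ : Finset (Fin n)).offDiag).Nonempty :=
      ⟨(⟨0, by omega⟩, ⟨1, by omega⟩), Finset.mem_offDiag.2 ⟨Finset.mem_univ _, Finset.mem_univ _, hne⟩⟩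
    have h1 : ∑ _q ∈ (Finset.univ : Finset (Fin n)).offDiag, T
        < ∑ q ∈ (Finset.univ : Finset (Fin n)).offDiag, Jc θ (p q.1) (p q.2) :=
      Finset.sum_lt_sum_of_nonempty hnonempty hlt
    rw [Finset.sum_const, Finset.offDiag_card, Finset.card_univ, Fintype.card_fin,
      nsmul_eq_mul] at h1
    have hcard : ((n * n - n : ℕ) : ℝ) = (n : ℝ) * ((n:ℝ) - 1) := by
      push_cast [Nat.cast_sub (by nlinarith : n ≤ n * n)]
      ring
    rw [hcard] at h1
    have : (n:ℝ) * ((n:ℝ) - 1) * T = (n : ℝ) * (Φ * M) := by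
      rw [hTdef]
      field_simp
    rw [this] at h1
    linarith
  obtain ⟨q, hq, hle⟩ := hpair
  calc minPairsC θ p ≤ Jc θ (p q.1) (p q.2) := by
        apply ciInf_le_of_le (Set.Finite.bddBelow (Set.finite_range _)) ⟨q, hq⟩
        exact le_refl _
    _ ≤ T := hle

lemma card_filter_mem {n : ℕ} (k : ℕ) (hk : 1 ≤ k) (i : Fin n) :
    (((Finset.univ : Finset (Fin n)).powersetCard k).filter (fun S => i ∈ S)).card
      = (n - 1).choose (k - 1) := by
  have h : (((Finset.univ : Finset (Fin n)).powersetCard k).filter (fun S => i ∈ S)).card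
      = (((Finset.univ : Finset (Fin n)).erase i).powersetCard (k - 1)).card := by
    apply Finset.card_nbij' (fun S => S.erase i) (fun T => insert i T)
    · intro S hS
      rw [Finset.mem_coe, Finset.mem_filter, Finset.mem_powersetCard] at hS
      rw [Finset.mem_coe, Finset.mem_powersetCard]
      constructor
      · exact Finset.erase_subset_erase i hS.1.1
      · rw [Finset.card_erase_of_mem hS.2, hS.1.2]
    · intro T hT
      rw [Finset.mem_coe, Finset.mem_powersetCard] at hT
      have hiT : i ∉ T := fun h => (Finset.mem_erase.1 (hT.1 h)).1 rfl
      rw [Finset.mem_coe, Finset.mem_filter, Finset.mem_powersetCard]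
      refine ⟨⟨Finset.subset_univ _, ?_⟩, Finset.mem_insert_self _ _⟩
      rw [Finset.card_insert_of_notMem hiT, hT.2]
      omega
    · intro S hS
      rw [Finset.mem_coe, Finset.mem_filter] at hS
      exact Finset.insert_erase hS.2
    · intro T hT
      rw [Finset.mem_coe, Finset.mem_powersetCard] at hT
      have hiT : i ∉ T := fun h => (Finset.mem_erase.1 (hT.1 h)).1 rfl
      exact Finset.erase_insert hiT
  rw [h, Finset.card_powersetCard, Finset.card_erase_of_mem (Finset.mem_univ i),
    Finset.card_univ, Fintype.card_fin]

lemma card_filter_mem_not {n : ℕ} (k : ℕ) (hk : 1 ≤ k) (i j : Fin n) (hij : i ≠ j) :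
    (((Finset.univ : Finset (Fin n)).powersetCard k).filter (fun S => i ∈ S ∧ j ∉ S)).card
      = (n - 2).choose (k - 1) := by
  have h : (((Finset.univ : Finset (Fin n)).powersetCard k).filter (fun S => i ∈ S ∧ j ∉ S)).card
      = ((((Finset.univ : Finset (Fin n)).erase j).erase i).powersetCard (k - 1)).card := by
    apply Finset.card_nbij' (fun S => S.erase i) (fun T => insert i T)
    · intro S hS
      rw [Finset.mem_coe, Finset.mem_filter, Finset.mem_powersetCard] at hS
      rw [Finset.mem_coe, Finset.mem_powersetCard]
      constructor
      · intro x hx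
        rw [Finset.mem_erase] at hx
        rw [Finset.mem_erase, Finset.mem_erase]
        refine ⟨hx.1, ?_, Finset.mem_univ x⟩
        intro hxj
        exact hS.2.2 (hxj ▸ hx.2)
      · rw [Finset.card_erase_of_mem hS.2.1, hS.1.2]
    · intro T hT
      rw [Finset.mem_coe, Finset.mem_powersetCard] at hT
      have hiT : i ∉ T := fun h => (Finset.mem_erase.1 (hT.1 h)).1 rfl
      have hjT : j ∉ T := fun h => (Finset.mem_erase.1 (Finset.mem_erase.1 (hT.1 h)).2).1 rfl
      rw [Finset.mem_coe, Finset.mem_filter, Finset.mem_powersetCard]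
      refine ⟨⟨Finset.subset_univ _, ?_⟩, Finset.mem_insert_self _ _, ?_⟩
      · rw [Finset.card_insert_of_notMem hiT, hT.2]; omega
      · rw [Finset.mem_insert]
        push_neg
        exact ⟨hij.symm, hjT⟩
    · intro S hS
      rw [Finset.mem_coe, Finset.mem_filter] at hS
      exact Finset.insert_erase hS.2.1
    · intro T hT
      rw [Finset.mem_coe, Finset.mem_powersetCard] at hT
      have hiT : i ∉ T := fun h => (Finset.mem_erase.1 (hT.1 h)).1 rfl
      exact Finset.erase_insert hiT
  have hmem : i ∈ (Finset.univ : Finset (Fin n)).erase j := by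
    rw [Finset.mem_erase]; exact ⟨hij, Finset.mem_univ i⟩
  rw [h, Finset.card_powersetCard, Finset.card_erase_of_mem hmem,
    Finset.card_erase_of_mem (Finset.mem_univ j), Finset.card_univ, Fintype.card_fin]
  congr 1


lemma final_arith (t : ℝ) (ht : 1 < t) (n k : ℕ) (hn : 2 ≤ n) (hk1 : 1 ≤ k) (hkn : k < n)
    (Φ : ℝ) :
    ((n-2).choose (k-1) : ℝ) * (1 / (t * ((n-1).choose (k-1) : ℝ) + ((n-1).choose k : ℝ))) * Φ
      = Φ / ((n:ℝ) - 1)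
        * ((k:ℝ) * ((n:ℝ) - (k:ℝ)) / ((k:ℝ) * t + (n:ℝ) - (k:ℝ))) := by
  have ht0 : (0:ℝ) < t := by linarith
  set A : ℝ := ((n-2).choose (k-1) : ℝ) with hA
  set B : ℝ := ((n-1).choose (k-1) : ℝ) with hB
  set C : ℝ := ((n-1).choose k : ℝ) with hC
  have hBpos : 0 < B := by
    rw [hB]; exact_mod_cast Nat.choose_pos (by omega : k - 1 ≤ n - 1)
  have hCnn : 0 ≤ C := by positivity
  have hden : 0 < t * B + C := by nlinarith
  have hn1 : (0:ℝ) < (n:ℝ) - 1 := by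
    have : (2:ℝ) ≤ (n:ℝ) := by exact_mod_cast hn
    linarith
  have hkR : (1:ℝ) ≤ (k:ℝ) := by exact_mod_cast hk1
  have hknR : (k:ℝ) < (n:ℝ) := by exact_mod_cast hkn
  have hden2 : (0:ℝ) < (k:ℝ) * t + (n:ℝ) - (k:ℝ) := by nlinarith
  obtain ⟨a, ha⟩ : ∃ a, n = a + 2 := ⟨n - 2, by omega⟩
  obtain ⟨b, hb⟩ : ∃ b, k = b + 1 := ⟨k - 1, by omega⟩
  have idA : ((n:ℝ) - 1) * A = ((n:ℝ) - (k:ℝ)) * B := by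
    have h2 : (a + 1) * a.choose b = (a+1).choose (b+1) * (b+1) := Nat.add_one_mul_choose_eq a b
    have h1 : (a+1).choose (b+1) * (b+1) = (a+1).choose b * (a + 1 - b) :=
      Nat.choose_succ_right_eq (a+1) b
    have h3 : ((a:ℝ) + 1) * (a.choose b : ℝ) = ((a+1).choose b : ℝ) * ((a:ℝ) + 1 - (b:ℝ)) := by
      have h4 := congrArg (Nat.cast : ℕ → ℝ) (h2.trans h1)
      push_cast [Nat.cast_sub (by omega : b ≤ a + 1)] at h4
      linarith
    rw [hA, hB, ha, hb]
    have e1 : a + 2 - 2 = a := by omega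
    have e2 : b + 1 - 1 = b := by omega
    have e3 : a + 2 - 1 = a + 1 := by omega
    rw [e1, e2, e3]
    push_cast
    linear_combination h3
  have idB : ((n:ℝ) - 1) * A = (k:ℝ) * C := by
    have h2 : (a + 1) * a.choose b = (a+1).choose (b+1) * (b+1) := Nat.add_one_mul_choose_eq a b
    have h3 := congrArg (Nat.cast : ℕ → ℝ) h2
    push_cast at h3
    rw [hA, hC, ha, hb]
    have e1 : a + 2 - 2 = a := by omega
    have e2 : b + 1 - 1 = b := by omega
    have e3 : a + 2 - 1 = a + 1 := by omega
    rw [e1, e2, e3]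
    push_cast
    linear_combination h3
  have key2 : A / (t * B + C)
      = ((k:ℝ) * ((n:ℝ) - (k:ℝ))) / (((n:ℝ) - 1) * ((k:ℝ) * t + ((n:ℝ) - (k:ℝ)))) := by
    rw [div_eq_div_iff hden.ne' (by nlinarith)]
    linear_combination ((k:ℝ) * t) * idA + ((n:ℝ) - (k:ℝ)) * idB
  calc A * (1 / (t * B + C)) * Φ
      = (A / (t * B + C)) * Φ := by ring
    _ = ((k:ℝ) * ((n:ℝ) - (k:ℝ))) / (((n:ℝ) - 1) * ((k:ℝ) * t + ((n:ℝ) - (k:ℝ)))) * Φ := by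
        rw [key2]
    _ = Φ / ((n:ℝ) - 1) * ((k:ℝ) * ((n:ℝ) - (k:ℝ)) / ((k:ℝ) * t + (n:ℝ) - (k:ℝ))) := by
        have h6 : ((k:ℝ) * t + ((n:ℝ) - (k:ℝ))) ≠ 0 := by nlinarith
        have h7 : ((k:ℝ) * t + (n:ℝ) - (k:ℝ)) ≠ 0 := hden2.ne'
        field_simp
        ring

lemma mc_attained (θ ε : ℝ) (hθ : θ ∈ Set.Icc (0:ℝ) 1) (hε : 0 < ε)
    (n : ℕ) (hn : 2 ≤ n) :
    ∃ (d : ℕ) (p : Fin n → Fin d → ℝ), IsDP ε p ∧ (∀ i k, 0 < p i k) ∧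
      minPairsC θ p
        = (fTheta θ (Real.exp ε) 1 + fTheta θ 1 (Real.exp ε)) / ((n : ℝ) - 1) * maxK n ε := by
  classical
  set t := Real.exp ε with htdef
  have ht : (1:ℝ) < t := Real.one_lt_exp_iff.2 hε
  have ht0 : (0:ℝ) < t := by linarith
  obtain ⟨k, hk1, hk2, hMval⟩ := maxK_mem n ε hn
  have hkn : k < n := by omega
  set pc := (Finset.univ : Finset (Fin n)).powersetCard k with hpc
  set d := pc.card with hd
  set e : Fin d ≃ {S // S ∈ pc} := pc.equivFin.symm with he
  set B : ℝ := ((n-1).choose (k-1) : ℝ) with hB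
  set C : ℝ := ((n-1).choose k : ℝ) with hC
  set A : ℝ := ((n-2).choose (k-1) : ℝ) with hA
  have hBpos : 0 < B := by
    rw [hB]
    exact_mod_cast Nat.choose_pos (by omega : k - 1 ≤ n - 1)
  have hCnn : 0 ≤ C := by positivity
  have hden : 0 < t * B + C := by nlinarith
  set v : ℝ := 1 / (t * B + C) with hv
  have hvpos : 0 < v := by positivity
  set u : ℝ := t * v with hu
  have hupos : 0 < u := by positivity
  set p : Fin n → Fin d → ℝ := fun i m => if i ∈ (e m : Finset (Fin n)) then u else v with hp
  have hppos : ∀ i m, 0 < p i m := by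
    intro i m
    rw [hp]
    dsimp only
    split <;> [exact hupos; exact hvpos]
  -- sum over index = sum over subsets
  have hsum_eq : ∀ g : Finset (Fin n) → ℝ, ∑ m : Fin d, g (e m : Finset (Fin n)) = ∑ S ∈ pc, g S := by
    intro g
    rw [Equiv.sum_comp e (fun x : {S // S ∈ pc} => g x.val)]
    exact Finset.sum_coe_sort pc g
  have hcard_pc : pc.card = n.choose k := by
    rw [hpc, Finset.card_powersetCard, Finset.card_univ, Fintype.card_fin]
  have hpascal : n.choose k = (n-1).choose (k-1) + (n-1).choose k := by
    obtain ⟨a, rfl⟩ : ∃ a, n = a + 1 := ⟨n - 1, by omega⟩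
    obtain ⟨b, rfl⟩ : ∃ b, k = b + 1 := ⟨k - 1, by omega⟩
    simp [Nat.choose_succ_succ]
  -- the count facts
  have hcmem : ∀ i : Fin n, ((pc.filter (fun S => i ∈ S)).card : ℝ) = B := by
    intro i
    rw [hpc, card_filter_mem k hk1 i, hB]
  have hcnot : ∀ i : Fin n, ((pc.filter (fun S => i ∉ S)).card : ℝ) = C := by
    intro i
    have h1 : (pc.filter (fun S => i ∈ S)).card + (pc.filter (fun S => i ∉ S)).card = pc.card :=
      Finset.card_filter_add_card_filter_not (p := fun S => i ∈ S)
    have h2 : (pc.filter (fun S => i ∈ S)).card = (n-1).choose (k-1) := by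
      rw [hpc]; exact card_filter_mem k hk1 i
    have h3 : (pc.filter (fun S => i ∉ S)).card = (n-1).choose k := by omega
    rw [h3, hC]
  -- normalization
  have hnorm : ∀ i : Fin n, ∑ m : Fin d, p i m = 1 := by
    intro i
    have : ∑ m : Fin d, p i m = ∑ S ∈ pc, (if i ∈ S then u else v) :=
      hsum_eq (fun S => if i ∈ S then u else v)
    rw [this, Finset.sum_ite, Finset.sum_const, Finset.sum_const, nsmul_eq_mul, nsmul_eq_mul,
      hcmem i, hcnot i]
    rw [hu, hv]
    field_simp
  refine ⟨d, p, ⟨fun i => ⟨fun m => (hppos i m).le, hnorm i⟩, ?_⟩, hppos, ?_⟩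
  · -- DP property
    intro i j m
    rw [hp, ← htdef]
    dsimp only
    by_cases hi : i ∈ (e m : Finset (Fin n)) <;> by_cases hj : j ∈ (e m : Finset (Fin n))
    · rw [if_pos hi, if_pos hj]
      nlinarith [mul_pos hupos (sub_pos.2 ht)]
    · rw [if_pos hi, if_neg hj]
    · rw [if_neg hi, if_pos hj]
      nlinarith [mul_pos (mul_pos hvpos (sub_pos.2 ht)) (by linarith : (0:ℝ) < t + 1)]
    · rw [if_neg hi, if_neg hj]
      nlinarith [mul_pos hvpos (sub_pos.2 ht)]
  · -- value of minPairsC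
    have hne : (⟨0, by omega⟩ : Fin n) ≠ (⟨1, by omega⟩ : Fin n) := by
      intro h
      have := congrArg Fin.val h
      simp at this
    have : Nonempty {q : Fin n × Fin n // q.1 ≠ q.2} :=
      ⟨⟨(⟨0, by omega⟩, ⟨1, by omega⟩), hne⟩⟩
    have hJconst : ∀ q : {q : Fin n × Fin n // q.1 ≠ q.2},
        Jc θ (p q.val.1) (p q.val.2) = A * v * (fTheta θ t 1 + fTheta θ 1 t) := by
      rintro ⟨⟨i, j⟩, hij⟩
      dsimp only at hij ⊢
      rw [Jc_eq]
      have hterm : ∀ m : Fin d, fTheta θ (p i m) (p j m)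
          = (if i ∈ (e m : Finset (Fin n)) ∧ j ∉ (e m : Finset (Fin n)) then v * fTheta θ t 1 else 0)
            + (if j ∈ (e m : Finset (Fin n)) ∧ i ∉ (e m : Finset (Fin n)) then v * fTheta θ 1 t else 0) := by
        intro m
        rw [hp]
        dsimp only
        by_cases hi : i ∈ (e m : Finset (Fin n)) <;> by_cases hj : j ∈ (e m : Finset (Fin n))
        · simp only [if_pos hi, if_pos hj, fTheta_self]
          rw [if_neg (by tauto), if_neg (by tauto)]
          ring
        · simp only [if_pos hi, if_neg hj]
          rw [if_pos ⟨hi, hj⟩, if_neg (by tauto), hu, fTheta_mul_left hθ ht0 hvpos]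
          ring
        · simp only [if_neg hi, if_pos hj]
          rw [if_neg (by tauto), if_pos ⟨hj, hi⟩, hu, fTheta_mul_right hθ ht0 hvpos]
          ring
        · simp only [if_neg hi, if_neg hj, fTheta_self]
          rw [if_neg (by tauto), if_neg (by tauto)]
          ring
      rw [Finset.sum_congr rfl (fun m _ => hterm m), Finset.sum_add_distrib]
      have h1 : ∑ m : Fin d,
          (if i ∈ (e m : Finset (Fin n)) ∧ j ∉ (e m : Finset (Fin n)) then v * fTheta θ t 1 else 0)
          = A * (v * fTheta θ t 1) := by
        rw [hsum_eq (fun S => if i ∈ S ∧ j ∉ S then v * fTheta θ t 1 else 0)]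
        rw [← Finset.sum_filter, Finset.sum_const, nsmul_eq_mul, hpc,
          card_filter_mem_not k hk1 i j hij, ← hA]
      have h2 : ∑ m : Fin d,
          (if j ∈ (e m : Finset (Fin n)) ∧ i ∉ (e m : Finset (Fin n)) then v * fTheta θ 1 t else 0)
          = A * (v * fTheta θ 1 t) := by
        rw [hsum_eq (fun S => if j ∈ S ∧ i ∉ S then v * fTheta θ 1 t else 0)]
        rw [← Finset.sum_filter, Finset.sum_const, nsmul_eq_mul, hpc,
          card_filter_mem_not k hk1 j i (Ne.symm hij), ← hA]
      rw [h1, h2]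
      ring
    have hmin : minPairsC θ p = A * v * (fTheta θ t 1 + fTheta θ 1 t) := by
      unfold minPairsC
      rw [iInf_congr hJconst]
      exact ciInf_const
    rw [← htdef] at hMval
    rw [hmin, hMval, hv]
    exact final_arith t ht n k hn hk1 hkn (fTheta θ t 1 + fTheta θ 1 t)


/-- For every real `θ ∈ [0,1]`, every real `ε > 0`, and every integer `n ≥ 2`,
`M_n^C(ε;J_θ) = ((f_θ(e^ε,1)+f_θ(1,e^ε))/(n−1)) · max_{1 ≤ k ≤ n/2} k(n−k)/(k e^ε + n − k)`. -/
theorem statement0 (θ ε : ℝ) (hθ : θ ∈ Set.Icc (0 : ℝ) 1) (hε : 0 < ε)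
    (n : ℕ) (hn : 2 ≤ n) :
    MC n ε θ =
      (fTheta θ (Real.exp ε) 1 + fTheta θ 1 (Real.exp ε)) / ((n : ℝ) - 1) * maxK n ε := by
  set T := (fTheta θ (Real.exp ε) 1 + fTheta θ 1 (Real.exp ε)) / ((n : ℝ) - 1) * maxK n ε
    with hT
  have hub : ∀ x ∈ {x : ℝ | ∃ (d : ℕ) (p : Fin n → Fin d → ℝ),
      IsDP ε p ∧ (∀ i k, 0 < p i k) ∧ x = minPairsC θ p}, x ≤ T := by
    rintro x ⟨d, p, hDP, hpos, rfl⟩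
    exact mc_upper θ ε hθ hε n hn d p hDP hpos
  obtain ⟨d, p, hDP, hpos, hval⟩ := mc_attained θ ε hθ hε n hn
  have hmem : T ∈ {x : ℝ | ∃ (d : ℕ) (p : Fin n → Fin d → ℝ),
      IsDP ε p ∧ (∀ i k, 0 < p i k) ∧ x = minPairsC θ p} := ⟨d, p, hDP, hpos, hval.symm⟩
  unfold MC
  exact le_antisymm (csSup_le ⟨T, hmem⟩ hub) (le_csSup ⟨T, hub⟩ hmem)


end
end
end

section
/- For every real θ ∈ [0,1], every real ε > 0, and every integer n ≥ 2, M_n^EC(ε;J_θ) = M_n^C(ε;J_θ); that is, the supremum of min_{i≠j} J_θ(ρ_i,ρ_j) over full-rank n-tuples in EC_n(ε) equals the supremum of min_{i≠j} J_θ(p_i,p_j) over ε-DP n-tuples of probability vectors with positive entries. -/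
open scoped BigOperators Classical ComplexOrder
open Matrix

noncomputable section

/-! ### Auxiliary lemmas -/

section Aux
open Matrix

lemma herm_smul' {D : ℕ} {A : Matrix (Fin D) (Fin D) ℂ} (hA : A.IsHermitian) (c : ℝ) :
    ((c : ℂ) • A).IsHermitian := by
  unfold Matrix.IsHermitian at *
  rw [conjTranspose_smul, Complex.star_def, Complex.conj_ofReal, hA]

lemma smul_psd' {D : ℕ} {A : Matrix (Fin D) (Fin D) ℂ} (hA : A.PosSemidef) {c : ℝ} (hc : 0 ≤ c) :
    ((c : ℂ) • A).PosSemidef := by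
  exact hA.smul (by exact_mod_cast hc)

lemma smul_pd' {D : ℕ} {A : Matrix (Fin D) (Fin D) ℂ} (hA : A.PosDef) {c : ℝ} (hc : 0 < c) :
    ((c : ℂ) • A).PosDef := by
  exact hA.smul (by exact_mod_cast hc)

lemma posDef_convex' {D : ℕ} {A B : Matrix (Fin D) (Fin D) ℂ} (hA : A.PosDef) (hB : B.PosDef)
    {θ : ℝ} (h0 : 0 ≤ θ) (h1 : θ ≤ 1) :
    ((1 - (θ:ℂ)) • A + (θ:ℂ) • B).PosDef := by
  have hcast : (1 - (θ:ℂ)) = ((1 - θ : ℝ) : ℂ) := by push_cast; ring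
  rcases eq_or_lt_of_le h1 with h | h
  · subst h
    rw [show ((1:ℂ) - ((1:ℝ):ℂ)) • A + ((1:ℝ):ℂ) • B = B by push_cast; simp]
    exact hB
  · rw [hcast]
    exact Matrix.PosDef.add_posSemidef (smul_pd' hA (by linarith)) (smul_psd' hB.posSemidef h0)

lemma tensor_psd' {D : ℕ} {S : Matrix (Fin D) (Fin D) ℂ} (hS : S.PosSemidef) (a b : ℝ) :
    (fromBlocks (((a*a : ℝ) : ℂ) • S) (((a*b : ℝ) : ℂ) • S)
      (((a*b : ℝ) : ℂ) • S) (((b*b : ℝ) : ℂ) • S)).PosSemidef := by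
  obtain ⟨B, hB⟩ : ∃ B : Matrix (Fin D) (Fin D) ℂ, S = Bᴴ * B := by
    open scoped MatrixOrder in exact CStarAlgebra.nonneg_iff_eq_star_mul_self.mp hS.nonneg
  have key : fromBlocks (((a*a : ℝ) : ℂ) • S) (((a*b : ℝ) : ℂ) • S)
      (((a*b : ℝ) : ℂ) • S) (((b*b : ℝ) : ℂ) • S)
      = (fromBlocks ((a:ℂ) • B) ((b:ℂ) • B) 0 0)ᴴ * (fromBlocks ((a:ℂ) • B) ((b:ℂ) • B) 0 0) := by
    rw [fromBlocks_conjTranspose, fromBlocks_multiply]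
    simp only [conjTranspose_smul, Complex.star_def, Complex.conj_ofReal,
      conjTranspose_zero, Matrix.zero_mul, Matrix.mul_zero, add_zero, zero_add,
      Matrix.smul_mul, Matrix.mul_smul, smul_smul, ← hB]
    push_cast
    rw [mul_comm (b:ℂ) (a:ℂ)]
  rw [key]
  exact posSemidef_conjTranspose_mul_self _

lemma psd_sum' {n' ι : Type} [Fintype n'] [Fintype ι] {M : ι → Matrix n' n' ℂ}
    (h : ∀ k, (M k).PosSemidef) :
    (∑ k, M k).PosSemidef :=
  Finset.sum_induction _ _ (fun _ _ ha hb => ha.add hb) Matrix.PosSemidef.zero (fun k _ => h k)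

lemma trace_re_nonneg' {D : ℕ} {A : Matrix (Fin D) (Fin D) ℂ} (hA : A.PosSemidef) :
    0 ≤ A.trace.re := by
  have hd : ∀ i, 0 ≤ A i i := fun i => by
    exact hA.diag_nonneg
  rw [Matrix.trace, Complex.re_sum]
  exact Finset.sum_nonneg fun i _ => by
    have := hd i
    rw [Complex.le_def] at this
    simpa using this.1

lemma key_ineq' {D m : ℕ} {θ : ℝ}
    {p q : Fin m → ℝ}
    {σ : Fin m → Matrix (Fin D) (Fin D) ℂ} (hσ : ∀ k, IsDensityMatrix (σ k))
    {ρ ρ' : Matrix (Fin D) (Fin D) ℂ}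
    (hρ : ρ = ∑ k, (p k : ℂ) • σ k) (hρ' : ρ' = ∑ k, (q k : ℂ) • σ k)
    (hw0 : ∀ k, 0 ≤ (1 - θ) * p k + θ * q k)
    (hw0' : ∀ k, (1 - θ) * p k + θ * q k = 0 → q k - p k = 0)
    (hτ : ((1 - (θ:ℂ)) • ρ + (θ:ℂ) • ρ').PosDef) :
    Jq θ ρ ρ' ≤ Jc θ p q := by
  set w : Fin m → ℝ := fun k => (1 - θ) * p k + θ * q k with hw
  set c : Fin m → ℝ := fun k => q k - p k with hc
  set t : Fin m → ℝ := fun k => (c k)^2 / w k with ht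
  set τ : Matrix (Fin D) (Fin D) ℂ := (1 - (θ:ℂ)) • ρ + (θ:ℂ) • ρ' with hτdef
  set X : Matrix (Fin D) (Fin D) ℂ := ρ' - ρ with hXdef
  set A : Matrix (Fin D) (Fin D) ℂ := ∑ k, ((t k : ℝ) : ℂ) • σ k with hA
  have hXsum : X = ∑ k, ((c k : ℝ) : ℂ) • σ k := by
    rw [hXdef, hρ, hρ', ← Finset.sum_sub_distrib]
    refine Finset.sum_congr rfl fun k _ => ?_
    rw [← sub_smul]; congr 1; norm_cast
  have hτsum : τ = ∑ k, ((w k : ℝ) : ℂ) • σ k := by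
    rw [hτdef, hρ, hρ', Finset.smul_sum, Finset.smul_sum, ← Finset.sum_add_distrib]
    refine Finset.sum_congr rfl fun k _ => ?_
    rw [smul_smul, smul_smul, ← add_smul]; congr 1; norm_cast
  have hblockpsd : (fromBlocks A X X τ).PosSemidef := by
    rw [hXsum, hτsum, hA]
    have hbl : fromBlocks (∑ k, ((t k:ℝ):ℂ) • σ k) (∑ k, ((c k:ℝ):ℂ) • σ k)
        (∑ k, ((c k:ℝ):ℂ) • σ k) (∑ k, ((w k:ℝ):ℂ) • σ k)
        = ∑ k, fromBlocks (((t k:ℝ):ℂ) • σ k) (((c k:ℝ):ℂ) • σ k)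
            (((c k:ℝ):ℂ) • σ k) (((w k:ℝ):ℂ) • σ k) := by
      ext (i | i) (j | j) <;> simp [Matrix.sum_apply]
    rw [hbl]
    apply psd_sum'
    intro k
    obtain ⟨a, b, hab1, hab2, hab3⟩ :
        ∃ a b : ℝ, a * a = (c k)^2 / w k ∧ a * b = c k ∧ b * b = w k := by
      rcases eq_or_lt_of_le (hw0 k) with h | h
      · have hwk : w k = 0 := h.symm
        have hck : c k = 0 := hw0' k hwk
        exact ⟨0, 0, by rw [hck, hwk]; simp, by rw [hck]; simp, by rw [hwk]; simp⟩
      · refine ⟨c k / Real.sqrt (w k), Real.sqrt (w k), ?_, ?_, Real.mul_self_sqrt (hw0 k)⟩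
        · rw [div_mul_div_comm, Real.mul_self_sqrt (hw0 k), sq]
        · rw [div_mul_cancel₀]
          exact (Real.sqrt_pos.mpr h).ne'
    have hps := tensor_psd' (hσ k).1 a b
    rw [hab1, hab2, hab3] at hps
    exact hps
  have hXh : Xᴴ = X := by
    rw [hXsum, conjTranspose_sum]
    refine Finset.sum_congr rfl fun k _ => herm_smul' (hσ k).1.1 (c k)
  haveI : Invertible τ := hτ.isUnit.invertible
  have hschur : (A - X * τ⁻¹ * X).PosSemidef := by
    have h1 : (fromBlocks A X Xᴴ τ).PosSemidef := by rw [hXh]; exact hblockpsd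
    have h2 := (Matrix.PosDef.fromBlocks₂₂ A X hτ).mp h1
    rwa [hXh] at h2
  have htr : (X * τ⁻¹ * X).trace.re ≤ A.trace.re := by
    have := trace_re_nonneg' hschur
    rw [Matrix.trace_sub, Complex.sub_re] at this
    linarith
  have hJq : Jq θ ρ ρ' = (X * τ⁻¹ * X).trace.re := by
    unfold Jq
    rw [← hXdef, ← hτdef, pow_two, ← Matrix.trace_mul_cycle X τ⁻¹ X]
  have hJc : A.trace.re = Jc θ p q := by
    rw [hA, Matrix.trace_sum]
    simp [Matrix.trace_smul, (fun k => (hσ k).2), Complex.re_sum, Jc]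
    rfl
  rw [hJq, ← hJc]
  exact htr

lemma Jq_nonneg' {D : ℕ} {θ : ℝ} (h0 : 0 ≤ θ) (h1 : θ ≤ 1)
    {ρ ρ' : Matrix (Fin D) (Fin D) ℂ} (hρ : ρ.PosDef) (hρ' : ρ'.PosDef) :
    0 ≤ Jq θ ρ ρ' := by
  have hτ : ((1 - (θ:ℂ)) • ρ + (θ:ℂ) • ρ').PosDef := posDef_convex' hρ hρ' h0 h1
  set τ : Matrix (Fin D) (Fin D) ℂ := (1 - (θ:ℂ)) • ρ + (θ:ℂ) • ρ' with hτdef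
  set X : Matrix (Fin D) (Fin D) ℂ := ρ' - ρ with hXdef
  have hXh : Xᴴ = X := by
    rw [hXdef, conjTranspose_sub, hρ'.1, hρ.1]
  have hpsd : (X * τ⁻¹ * X).PosSemidef := by
    have h2 := (hτ.inv).posSemidef.conjTranspose_mul_mul_same X
    rwa [hXh] at h2
  have hJq : Jq θ ρ ρ' = (X * τ⁻¹ * X).trace.re := by
    unfold Jq
    rw [← hXdef, ← hτdef, pow_two, ← Matrix.trace_mul_cycle X τ⁻¹ X]
  rw [hJq]
  exact trace_re_nonneg' hpsd

lemma Jc_nonneg' {d : ℕ} {θ : ℝ} (h0 : 0 ≤ θ) (h1 : θ ≤ 1) {p q : Fin d → ℝ}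
    (hp : ∀ k, 0 ≤ p k) (hq : ∀ k, 0 ≤ q k) : 0 ≤ Jc θ p q :=
  Finset.sum_nonneg fun k _ => div_nonneg (sq_nonneg _)
    (add_nonneg (mul_nonneg (by linarith) (hp k)) (mul_nonneg h0 (hq k)))

lemma Jc_le_bound' {d : ℕ} {θ ε : ℝ} (h0 : 0 ≤ θ) (h1 : θ ≤ 1) (hε : 0 < ε)
    {p q : Fin d → ℝ} (hp : IsProbVec p) (hq : IsProbVec q)
    (hpq : ∀ k, p k ≤ Real.exp ε * q k) (hqp : ∀ k, q k ≤ Real.exp ε * p k) :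
    Jc θ p q ≤ (Real.exp ε - 1) ^ 2 := by
  set E := Real.exp ε with hE
  have hE1 : 1 ≤ E := Real.one_le_exp hε.le
  have hterm : ∀ k, (q k - p k) ^ 2 / ((1 - θ) * p k + θ * q k)
      ≤ (E - 1) ^ 2 * ((1 - θ) * p k + θ * q k) := by
    intro k
    set w := (1 - θ) * p k + θ * q k with hwdef
    have hpk := hp.1 k; have hqk := hq.1 k
    have hw0 : 0 ≤ w := add_nonneg (mul_nonneg (by linarith) hpk) (mul_nonneg h0 hqk)
    have hmin : min (p k) (q k) ≤ w := by
      have h1' : min (p k) (q k) ≤ p k := min_le_left _ _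
      have h2' : min (p k) (q k) ≤ q k := min_le_right _ _
      nlinarith
    have habs : |q k - p k| ≤ (E - 1) * w := by
      rw [abs_le]
      constructor
      · rcases le_total (p k) (q k) with h | h
        · nlinarith
        · have hm : min (p k) (q k) = q k := min_eq_right h
          nlinarith [hpq k, hmin]
      · rcases le_total (q k) (p k) with h | h
        · nlinarith
        · have hm : min (p k) (q k) = p k := min_eq_left h
          nlinarith [hqp k, hmin]
    rcases eq_or_lt_of_le hw0 with h | h
    · rw [← h, div_zero]
      nlinarith
    · rw [div_le_iff₀ h]
      have hsq : (q k - p k)^2 ≤ ((E-1)*w)^2 := by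
        have := abs_nonneg (q k - p k)
        nlinarith [sq_abs (q k - p k)]
      nlinarith
  calc Jc θ p q ≤ ∑ k, (E - 1) ^ 2 * ((1 - θ) * p k + θ * q k) :=
        Finset.sum_le_sum fun k _ => hterm k
    _ = (E - 1) ^ 2 := by
        rw [← Finset.mul_sum]
        have hs : ∑ k, ((1 - θ) * p k + θ * q k) = 1 := by
          rw [Finset.sum_add_distrib, ← Finset.mul_sum, ← Finset.mul_sum, hp.2, hq.2]
          ring
        rw [hs, mul_one]

lemma reduce' {n m : ℕ} (hn : 0 < n) {ε : ℝ} {p : Fin n → Fin m → ℝ}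
    (hp : IsDP ε p) (θ : ℝ) :
    ∃ (d' : ℕ) (p' : Fin n → Fin d' → ℝ), IsDP ε p' ∧ (∀ i k, 0 < p' i k) ∧
      ∀ i j, Jc θ (p' i) (p' j) = Jc θ (p i) (p j) := by
  have hEpos : 0 < Real.exp ε := Real.exp_pos ε
  set i₀ : Fin n := ⟨0, hn⟩
  set K : Finset (Fin m) := Finset.univ.filter (fun k => 0 < p i₀ k) with hK
  have hzero : ∀ k ∉ K, ∀ i, p i k = 0 := by
    intro k hk i
    have h0 : p i₀ k = 0 :=
      le_antisymm (not_lt.1 (by simpa [hK] using hk)) ((hp.1 i₀).1 k)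
    have h2 := hp.2 i i₀ k
    rw [h0, mul_zero] at h2
    exact le_antisymm h2 ((hp.1 i).1 k)
  have hpos : ∀ k ∈ K, ∀ i, 0 < p i k := by
    intro k hk i
    have h0 : 0 < p i₀ k := by simpa [hK] using hk
    have h2 := hp.2 i₀ i k
    nlinarith [(hp.1 i).1 k]
  set e := K.equivFin with he
  have hsum : ∀ (f : Fin m → ℝ), (∀ k ∉ K, f k = 0) →
      ∑ a : Fin K.card, f (e.symm a) = ∑ k, f k := by
    intro f hf
    calc ∑ a : Fin K.card, f (e.symm a)
        = ∑ x : K, f x :=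
          (Fintype.sum_equiv e (fun x : K => f x.1) (fun a => f (e.symm a))
            (fun x => by simp)).symm
      _ = ∑ k ∈ K, f k := Finset.sum_coe_sort K f
      _ = ∑ k, f k :=
          Finset.sum_subset (Finset.subset_univ K) (fun x _ hx => hf x hx)
  refine ⟨K.card, fun i a => p i (e.symm a), ⟨fun i => ⟨fun a => ((hp.1 i).1 _), ?_⟩, ?_⟩,
    fun i a => hpos _ (e.symm a).2 i, fun i j => ?_⟩
  · rw [hsum (p i) (fun k hk => hzero k hk i)]
    exact (hp.1 i).2
  · intro i j a
    exact hp.2 i j _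
  · unfold Jc
    dsimp only
    exact hsum (fun k => (p j k - p i k) ^ 2 / ((1 - θ) * p i k + θ * p j k))
      (fun k hk => by rw [hzero k hk i, hzero k hk j]; simp)

lemma diag_rep' {d : ℕ} (v : Fin d → ℝ) :
    (∑ k, (v k : ℂ) • Matrix.diagonal (fun l => if l = k then (1:ℂ) else 0))
      = Matrix.diagonal (fun l => (v l : ℂ)) := by
  ext i j
  by_cases h : i = j
  · subst h; simp [Matrix.sum_apply, Matrix.diagonal_apply]
  · simp [Matrix.sum_apply, Matrix.diagonal_apply, h]

lemma Jq_diag' {d : ℕ} (θ : ℝ) (p q : Fin d → ℝ)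
    (hw : ∀ k, 0 < (1 - θ) * p k + θ * q k) :
    Jq θ (Matrix.diagonal (fun k => (p k : ℂ))) (Matrix.diagonal (fun k => (q k : ℂ)))
      = Jc θ p q := by
  set w : Fin d → ℝ := fun k => (1 - θ) * p k + θ * q k with hwdef
  have h1 : (1 - (θ:ℂ)) • Matrix.diagonal (fun k => (p k : ℂ))
      + (θ:ℂ) • Matrix.diagonal (fun k => (q k : ℂ))
      = Matrix.diagonal (fun k => ((w k : ℝ) : ℂ)) := by
    ext i j
    by_cases h : i = j
    · subst h
      simp only [Matrix.add_apply, Matrix.smul_apply, Matrix.diagonal_apply_eq, smul_eq_mul, hwdef]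
      push_cast; ring
    · simp [Matrix.diagonal_apply_ne _ h, h]
  have h2 : (Matrix.diagonal (fun k => ((w k : ℝ) : ℂ)))⁻¹
      = Matrix.diagonal (fun k => ((w k : ℝ) : ℂ)⁻¹) := by
    apply Matrix.inv_eq_right_inv
    rw [Matrix.diagonal_mul_diagonal]
    convert Matrix.diagonal_one with k
    exact mul_inv_cancel₀ (by exact_mod_cast (hw k).ne')
  have h3 : (Matrix.diagonal (fun k => (q k : ℂ)) - Matrix.diagonal (fun k => (p k : ℂ)))
      = Matrix.diagonal (fun k => ((q k - p k : ℝ) : ℂ)) := by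
    rw [Matrix.diagonal_sub]
    congr 1; funext k; push_cast; ring
  unfold Jq Jc
  rw [h3, h1, h2, Matrix.diagonal_pow, Matrix.diagonal_mul_diagonal, Matrix.trace_diagonal]
  rw [Complex.re_sum]
  refine Finset.sum_congr rfl fun k _ => ?_
  simp only [Pi.pow_apply]
  have hcast : (((q k - p k : ℝ) : ℂ))^2 * ((w k : ℝ) : ℂ)⁻¹
      = (((q k - p k)^2 / w k : ℝ) : ℂ) := by
    push_cast
    ring
  rw [hcast, Complex.ofReal_re]

lemma wpos' {θ a b : ℝ} (h0 : 0 ≤ θ) (h1 : θ ≤ 1) (ha : 0 < a) (hb : 0 < b) :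
    0 < (1 - θ) * a + θ * b := by
  rcases eq_or_lt_of_le h0 with h | h
  · rw [← h]; simpa using ha
  · exact add_pos_of_nonneg_of_pos (mul_nonneg (by linarith) ha.le) (mul_pos h hb)

lemma wzero' {θ a b E : ℝ} (h0 : 0 ≤ θ) (h1 : θ ≤ 1) (ha : 0 ≤ a) (hb : 0 ≤ b)
    (hab : a ≤ E * b) (hba : b ≤ E * a) (hE : 0 < E)
    (h : (1 - θ) * a + θ * b = 0) : b - a = 0 := by
  have h1' : (1 - θ) * a = 0 ∧ θ * b = 0 := by
    constructor <;> nlinarith [mul_nonneg (by linarith : (0:ℝ) ≤ 1 - θ) ha, mul_nonneg h0 hb]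
  rcases eq_or_lt_of_le h0 with hth | hth
  · have haz : a = 0 := by nlinarith [h1'.1]
    have hbz : b = 0 := by nlinarith
    rw [haz, hbz]; ring
  · have hbz : b = 0 := by
      rcases mul_eq_zero.mp h1'.2 with h' | h'
      · exact absurd h'.symm hth.ne
      · exact h'
    have haz : a = 0 := by nlinarith
    rw [haz, hbz]; ring

end Aux

/-- `M_n^EC(ε;J_θ) = M_n^C(ε;J_θ)` for all `θ ∈ [0,1]`, `ε > 0`, `n ≥ 2`. -/
theorem statement2 (θ ε : ℝ) (hθ : θ ∈ Set.Icc (0 : ℝ) 1) (hε : 0 < ε)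
    (n : ℕ) (hn : 2 ≤ n) :
    MEC n ε θ = MC n ε θ := by
  obtain ⟨hθ0, hθ1⟩ := hθ
  have hE1 : 1 ≤ Real.exp ε := Real.one_le_exp hε.le
  have hEpos : 0 < Real.exp ε := Real.exp_pos ε
  have hnpos : 0 < n := by omega
  set SC : Set ℝ := {x : ℝ | ∃ (d : ℕ) (p : Fin n → Fin d → ℝ),
    IsDP ε p ∧ (∀ i k, 0 < p i k) ∧ x = minPairsC θ p} with hSC
  set SEC : Set ℝ := {x : ℝ | ∃ (d : ℕ) (ρ : Fin n → Matrix (Fin d) (Fin d) ℂ),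
    InEC ε ρ ∧ (∀ i, (ρ i).PosDef) ∧ x = minPairsQ θ ρ} with hSEC
  have hMEC : MEC n ε θ = sSup SEC := rfl
  have hMC : MC n ε θ = sSup SC := rfl
  -- a canonical pair of distinct indices
  have h01 : ((⟨0, by omega⟩ : Fin n), (⟨1, by omega⟩ : Fin n)).1
      ≠ ((⟨0, by omega⟩ : Fin n), (⟨1, by omega⟩ : Fin n)).2 := by
    simp [Fin.ext_iff]
  set ij0 : {q : Fin n × Fin n // q.1 ≠ q.2} :=
    ⟨((⟨0, by omega⟩ : Fin n), (⟨1, by omega⟩ : Fin n)), h01⟩ with hij0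
  haveI hne : Nonempty {q : Fin n × Fin n // q.1 ≠ q.2} := ⟨ij0⟩
  -- S_C is bounded above by (e^ε - 1)^2
  have hSCbound : ∀ x ∈ SC, x ≤ (Real.exp ε - 1) ^ 2 := by
    rintro x ⟨d, p, hDP, hpos, rfl⟩
    have hbb : BddBelow (Set.range fun ij : {q : Fin n × Fin n // q.1 ≠ q.2} =>
        Jc θ (p ij.val.1) (p ij.val.2)) := by
      refine ⟨0, ?_⟩
      rintro y ⟨ij, rfl⟩
      exact Jc_nonneg' hθ0 hθ1 (fun k => (hpos _ k).le) (fun k => (hpos _ k).le)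
    exact ciInf_le_of_le hbb ij0
      (Jc_le_bound' hθ0 hθ1 hε (hDP.1 _) (hDP.1 _) (fun k => hDP.2 _ _ k) (fun k => hDP.2 _ _ k))
  have hbddC : BddAbove SC := ⟨(Real.exp ε - 1) ^ 2, hSCbound⟩
  -- 0 ∈ SC
  have hmem0 : (0:ℝ) ∈ SC := by
    refine ⟨1, fun _ _ => 1, ⟨fun i => ⟨fun _ => zero_le_one, by simp⟩,
      fun i j k => by simpa using hE1⟩, fun _ _ => one_pos, ?_⟩
    have hJ : ∀ ij : {q : Fin n × Fin n // q.1 ≠ q.2},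
        Jc θ (fun _ : Fin 1 => (1:ℝ)) (fun _ : Fin 1 => (1:ℝ)) = 0 := by
      intro ij; simp [Jc]
    rw [minPairsC]
    simp [Jc]
  have h0MC : (0:ℝ) ≤ sSup SC := le_csSup hbddC hmem0
  -- Step A : SC ⊆ SEC
  have hstepA : SC ⊆ SEC := by
    rintro x ⟨d, p, hDP, hpos, rfl⟩
    refine ⟨d, fun i => Matrix.diagonal (fun k => (p i k : ℂ)), ?_, ?_, ?_⟩
    · refine ⟨d, p, fun k => Matrix.diagonal (fun l => if l = k then (1:ℂ) else 0),
        hDP, fun k => ⟨?_, ?_⟩, fun i => (diag_rep' (p i)).symm⟩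
      · refine Matrix.PosSemidef.diagonal ?_
        intro l
        dsimp only
        split
        · exact zero_le_one
        · exact le_refl 0
      · rw [Matrix.trace_diagonal]
        simp
    · intro i
      refine Matrix.PosDef.diagonal ?_
      intro k
      exact_mod_cast hpos i k
    · refine iInf_congr fun ij => ?_
      exact (Jq_diag' θ (p ij.val.1) (p ij.val.2)
        (fun k => wpos' hθ0 hθ1 (hpos _ k) (hpos _ k))).symm
  -- Step B : every element of SEC is ≤ sSup SC, and bounded
  have hstepB : ∀ x ∈ SEC, x ≤ sSup SC ∧ x ≤ (Real.exp ε - 1) ^ 2 := by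
    rintro x ⟨d, ρ, ⟨m, p, σ, hDP, hσ, hrep⟩, hPD, rfl⟩
    have hkey : ∀ i j : Fin n, Jq θ (ρ i) (ρ j) ≤ Jc θ (p i) (p j) := by
      intro i j
      refine key_ineq' hσ (hrep i) (hrep j) ?_ ?_
        (posDef_convex' (hPD i) (hPD j) hθ0 hθ1)
      · intro k
        exact add_nonneg (mul_nonneg (by linarith) ((hDP.1 i).1 k))
          (mul_nonneg hθ0 ((hDP.1 j).1 k))
      · intro k hk
        exact wzero' hθ0 hθ1 ((hDP.1 i).1 k) ((hDP.1 j).1 k)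
          (hDP.2 i j k) (hDP.2 j i k) hEpos hk
    have hbbq : BddBelow (Set.range fun ij : {q : Fin n × Fin n // q.1 ≠ q.2} =>
        Jq θ (ρ ij.val.1) (ρ ij.val.2)) := by
      refine ⟨0, ?_⟩
      rintro y ⟨ij, rfl⟩
      exact Jq_nonneg' hθ0 hθ1 (hPD _) (hPD _)
    constructor
    · have h1 : minPairsQ θ ρ ≤ minPairsC θ p :=
        ciInf_mono hbbq fun ij => hkey _ _
      obtain ⟨d', p', hDP', hpos', hJc'⟩ := reduce' hnpos hDP θ
      have h2 : minPairsC θ p' = minPairsC θ p :=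
        iInf_congr fun ij => hJc' _ _
      have h3 : minPairsC θ p' ≤ sSup SC :=
        le_csSup hbddC ⟨d', p', hDP', hpos', rfl⟩
      calc minPairsQ θ ρ ≤ minPairsC θ p := h1
        _ = minPairsC θ p' := h2.symm
        _ ≤ sSup SC := h3
    · refine ciInf_le_of_le hbbq ij0 ?_
      exact (hkey _ _).trans (Jc_le_bound' hθ0 hθ1 hε (hDP.1 _) (hDP.1 _)
        (fun k => hDP.2 _ _ k) (fun k => hDP.2 _ _ k))
  have hbddEC : BddAbove SEC := ⟨(Real.exp ε - 1) ^ 2, fun x hx => (hstepB x hx).2⟩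
  have h0MEC : (0:ℝ) ≤ sSup SEC := le_csSup hbddEC (hstepA hmem0)
  rw [hMEC, hMC]
  refine le_antisymm ?_ ?_
  · exact Real.sSup_le (fun x hx => (hstepB x hx).1) h0MC
  · exact Real.sSup_le (fun x hx => le_csSup hbddEC (hstepA hx)) h0MEC


end
end

section
/- Let φ : (0,∞)^n → ℝ be sublinear (φ(x+y) ≤ φ(x)+φ(y) and φ(αx) = αφ(x) for all x,y ∈ (0,∞)^n and α > 0), and let Φ_C be the function on n-tuples of probability vectors defined by Φ_C(p_1,…,p_n) = Σ_{k : p_1(k),…,p_n(k) > 0} φ(p_1(k),…,p_n(k)). Then for all ε > 0 and n ≥ 2, the supremum of Φ_C over all ε-DP n-tuples (over all dimensions) equals the maximum of Σ_{v ∈ S_n(ε)} φ(v(1),…,v(n)) α_v over all families of nonnegative reals (α_v)_{v ∈ S_n(ε)} satisfying Σ_{v ∈ S_n(ε)} α_v v = (1,…,1) ∈ ℝ^n, where S_n(ε) = {1, e^ε}^n. -/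
open scoped BigOperators Classical ComplexOrder
open Matrix

noncomputable section

private lemma decomp_dp {n : ℕ} (hn : 0 < n) {E : ℝ} (hE : 1 < E) (c : Fin n → ℝ)
    (hc : ∀ i, 0 < c i) (hdp : ∀ i j, c i ≤ E * c j) :
    ∃ β : (Fin n → Bool) → ℝ, (∀ s, 0 ≤ β s) ∧
      ∀ i, ∑ s, β s * (if s i then E else 1) = c i := by
  classical
  set σ := Tuple.sort c with hσdef
  have hmono : Monotone (c ∘ σ) := Tuple.monotone_sort c
  set m := c (σ ⟨0, hn⟩) with hmdef
  have hm_le : ∀ i, m ≤ c i := by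
    intro i
    have h0 : (⟨0, hn⟩ : Fin n) ≤ σ.symm i := by simp [Fin.le_def]
    have h1 := hmono h0
    simpa using h1
  have hm_pos : 0 < m := hc _
  have hub : ∀ i, c i ≤ E * m := fun i => hdp i _
  have hD : 0 < m * (E - 1) := mul_pos hm_pos (by linarith)
  set b : Fin n → ℝ := fun i => (c i - m) / (m * (E - 1)) with hbdef
  have hb0 : ∀ i, 0 ≤ b i := fun i => div_nonneg (by linarith [hm_le i]) hD.le
  have hb1 : ∀ i, b i ≤ 1 := by
    intro i
    rw [hbdef]
    simp only
    rw [div_le_one hD]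
    have := hub i; nlinarith
  have hbc : ∀ i, m * (E - 1) * b i = c i - m := by
    intro i; rw [hbdef]; field_simp [(sub_pos.mpr hE).ne']
  have hbmono : ∀ j j' : Fin n, j ≤ j' → b (σ j) ≤ b (σ j') := by
    intro j j' hjj
    have h1 : c (σ j) ≤ c (σ j') := hmono hjj
    rw [hbdef]
    exact (div_le_div_iff_of_pos_right hD).mpr (by linarith)
  -- natural-number indexed sorted b, extended constantly
  set bs : ℕ → ℝ := fun j => if h : j < n then b (σ ⟨j, h⟩) else b (σ ⟨0, hn⟩) with hbsdef
  have hbs0 : ∀ j, 0 ≤ bs j := by intro j; rw [hbsdef]; dsimp only; split <;> exact hb0 _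
  have hbs1 : ∀ j, bs j ≤ 1 := by intro j; rw [hbsdef]; dsimp only; split <;> exact hb1 _
  have hbs_mono : ∀ j j', j ≤ j' → j' < n → bs j ≤ bs j' := by
    intro j j' hjj hj'
    have hj : j < n := lt_of_le_of_lt hjj hj'
    rw [hbsdef]; dsimp only
    rw [dif_pos hj, dif_pos hj']
    exact hbmono _ _ (by simpa [Fin.le_def] using hjj)
  set g : ℕ → ℝ := fun j => if j = 0 then 0 else bs (j - 1) with hgdef
  have hg0 : g 0 = 0 := by rw [hgdef]; simp
  have hgs : ∀ j, g (j + 1) = bs j := by intro j; rw [hgdef]; simp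
  set γ : ℕ → ℝ := fun j => g (j + 1) - g j with hγdef
  have htel : ∀ r, ∑ j ∈ Finset.range r, γ j = g r := by
    intro r
    have h1 := Finset.sum_range_sub g r
    rw [hg0] at h1
    simpa [hγdef] using h1
  have hγ0 : ∀ j, j < n → 0 ≤ γ j := by
    intro j hj
    rw [hγdef]; dsimp only
    rw [hgs j]
    rcases Nat.eq_zero_or_pos j with h0 | h0
    · subst h0; rw [hg0]; simpa using hbs0 0
    · rw [hgdef]; dsimp only
      rw [if_neg (Nat.pos_iff_ne_zero.mp h0)]
      have := hbs_mono (j-1) j (Nat.sub_le j 1) hj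
      linarith
  set N := n - 1 with hNdef
  have hNlt : N < n := Nat.sub_lt hn one_pos
  have hsum_range : ∑ j ∈ Finset.range n, γ j = bs N := by
    rw [htel n, hgdef]
    simp [Nat.pos_iff_ne_zero.mp hn, hNdef]
  set tf : ℕ → (Fin n → Bool) := fun j i => decide (j ≤ (σ.symm i : ℕ)) with htfdef
  refine ⟨fun s => m * ((if s = (fun _ => false) then 1 - bs N else 0)
      + ∑ j ∈ Finset.range n, if s = tf j then γ j else 0), ?_, ?_⟩
  · intro s
    refine mul_nonneg hm_pos.le (add_nonneg ?_ ?_)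
    · split
      · linarith [hbs1 N]
      · exact le_rfl
    · refine Finset.sum_nonneg fun j hj => ?_
      split
      · exact hγ0 j (Finset.mem_range.mp hj)
      · exact le_rfl
  · intro i
    have hrn : ((σ.symm i : Fin n) : ℕ) < n := (σ.symm i).isLt
    have hbi : bs ((σ.symm i : Fin n) : ℕ) = b i := by
      rw [hbsdef]; dsimp only
      rw [dif_pos hrn]
      congr 1
      have : (⟨((σ.symm i : Fin n) : ℕ), hrn⟩ : Fin n) = σ.symm i := by ext; rfl
      rw [this]
      exact Equiv.apply_symm_apply σ i
    have e1 : ∑ s : Fin n → Bool, (if s = (fun _ => false) then 1 - bs N else 0)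
        * (if s i then E else 1) = 1 - bs N := by
      rw [Finset.sum_eq_single (fun _ => false : Fin n → Bool)]
      · simp
      · intro s _ hs; rw [if_neg hs]; ring
      · intro h; exact absurd (Finset.mem_univ _) h
    have e2 : ∀ j, ∑ s : Fin n → Bool, (if s = tf j then γ j else 0) * (if s i then E else 1)
        = γ j * (if j ≤ ((σ.symm i : Fin n) : ℕ) then E else 1) := by
      intro j
      rw [Finset.sum_eq_single (tf j)]
      · rw [if_pos rfl]
        congr 1
        rw [htfdef]
        simp
      · intro s _ hs; rw [if_neg hs]; ring
      · intro h; exact absurd (Finset.mem_univ _) h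
    have e3 : ∑ j ∈ Finset.range n, γ j * (if j ≤ ((σ.symm i : Fin n) : ℕ) then E else 1)
        = bs N + (E - 1) * b i := by
      have hterm : ∀ j, γ j * (if j ≤ ((σ.symm i : Fin n) : ℕ) then E else 1)
          = γ j + (E - 1) * (if j ≤ ((σ.symm i : Fin n) : ℕ) then γ j else 0) := by
        intro j; split <;> ring
      rw [Finset.sum_congr rfl (fun j _ => hterm j), Finset.sum_add_distrib, ← Finset.mul_sum]
      have h4 : ∑ j ∈ Finset.range n, (if j ≤ ((σ.symm i : Fin n) : ℕ) then γ j else 0)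
          = ∑ j ∈ Finset.range (((σ.symm i : Fin n) : ℕ) + 1), γ j := by
        rw [← Finset.sum_filter]
        apply Finset.sum_congr _ (fun _ _ => rfl)
        ext j
        simp only [Finset.mem_filter, Finset.mem_range]
        omega
      rw [hsum_range, h4, htel, hgs, hbi]
    have expand : ∀ s : Fin n → Bool,
        (m * ((if s = (fun _ => false) then 1 - bs N else 0)
          + ∑ j ∈ Finset.range n, if s = tf j then γ j else 0)) * (if s i then E else 1)
        = m * ((if s = (fun _ => false) then 1 - bs N else 0) * (if s i then E else 1))
        + m * ∑ j ∈ Finset.range n, ((if s = tf j then γ j else 0) * (if s i then E else 1)) := by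
      intro s; rw [← Finset.sum_mul]; ring
    rw [Finset.sum_congr rfl (fun s _ => expand s), Finset.sum_add_distrib,
        ← Finset.mul_sum, ← Finset.mul_sum, e1, Finset.sum_comm,
        Finset.sum_congr rfl (fun j (_ : j ∈ Finset.range n) => e2 j), e3]
    have := hbc i
    nlinarith [hbc i]


private lemma phi_finset_le {n : ℕ} (φ : (Fin n → ℝ) → ℝ)
    (hadd : ∀ x y : Fin n → ℝ, (∀ i, 0 < x i) → (∀ i, 0 < y i) → φ (x + y) ≤ φ x + φ y)
    (hsmul : ∀ (a : ℝ) (x : Fin n → ℝ), 0 < a → (∀ i, 0 < x i) → φ (a • x) = a * φ x)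
    {ι : Type*} (w : ι → Fin n → ℝ) (hw : ∀ t i, 0 < w t i)
    {T : Finset ι} (hT : T.Nonempty) (β : ι → ℝ) (hβ : ∀ t ∈ T, 0 < β t) :
    φ (fun i => ∑ t ∈ T, β t * w t i) ≤ ∑ t ∈ T, β t * φ (w t) := by
  classical
  induction hT using Finset.Nonempty.cons_induction with
  | singleton a =>
      have h := hsmul (β a) (w a) (hβ a (Finset.mem_singleton_self a)) (hw a)
      simp only [Finset.sum_singleton]
      exact le_of_eq h
  | cons a s ha hs ih =>
      have hβa : 0 < β a := hβ a (Finset.mem_cons_self a s)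
      have hβs : ∀ t ∈ s, 0 < β t := fun t ht => hβ t (Finset.mem_cons_of_mem ht)
      have hx : ∀ i, 0 < β a * w a i := fun i => mul_pos hβa (hw a i)
      have hy : ∀ i, 0 < ∑ t ∈ s, β t * w t i := fun i =>
        Finset.sum_pos (fun t ht => mul_pos (hβs t ht) (hw t i)) hs
      have h1 : φ ((fun i => β a * w a i) + (fun i => ∑ t ∈ s, β t * w t i))
          ≤ φ (fun i => β a * w a i) + φ (fun i => ∑ t ∈ s, β t * w t i) :=
        hadd _ _ hx hy
      have h3 : φ (fun i => β a * w a i) = β a * φ (w a) :=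
        hsmul (β a) (w a) hβa (hw a)
      have h2 := ih hβs
      calc φ (fun i => ∑ t ∈ Finset.cons a s ha, β t * w t i)
          = φ ((fun i => β a * w a i) + (fun i => ∑ t ∈ s, β t * w t i)) := by
            congr 1; funext i; rw [Finset.sum_cons]; rfl
        _ ≤ φ (fun i => β a * w a i) + φ (fun i => ∑ t ∈ s, β t * w t i) := h1
        _ ≤ β a * φ (w a) + ∑ t ∈ s, β t * φ (w t) := by rw [h3]; linarith
        _ = ∑ t ∈ Finset.cons a s ha, β t * φ (w t) := by rw [Finset.sum_cons]

private lemma phi_le_sum {n : ℕ} (hn : 0 < n) (φ : (Fin n → ℝ) → ℝ)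
    (hadd : ∀ x y : Fin n → ℝ, (∀ i, 0 < x i) → (∀ i, 0 < y i) → φ (x + y) ≤ φ x + φ y)
    (hsmul : ∀ (a : ℝ) (x : Fin n → ℝ), 0 < a → (∀ i, 0 < x i) → φ (a • x) = a * φ x)
    {E : ℝ} (hE : 0 < E) (β : (Fin n → Bool) → ℝ) (hβ : ∀ s, 0 ≤ β s)
    (hpos : ∀ i, 0 < ∑ s, β s * (if s i then E else 1)) :
    φ (fun i => ∑ s, β s * (if s i then E else 1))
      ≤ ∑ s, β s * φ (fun i => if s i then E else 1) := by
  classical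
  set w : (Fin n → Bool) → Fin n → ℝ := fun s i => if s i then E else 1 with hwdef
  have hw : ∀ s i, 0 < w s i := by
    intro s i; rw [hwdef]; dsimp only; split
    · exact hE
    · exact one_pos
  set T : Finset (Fin n → Bool) := Finset.univ.filter (fun s => β s ≠ 0) with hTdef
  have hTsub : ∀ (f : (Fin n → Bool) → ℝ), (∀ s, β s = 0 → f s = 0) →
      ∑ s ∈ T, f s = ∑ s, f s := by
    intro f hf
    refine Finset.sum_subset (Finset.filter_subset _ _) ?_
    intro s _ hs
    rw [hTdef] at hs
    simp only [Finset.mem_filter, Finset.mem_univ, true_and, not_not] at hs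
    exact hf s hs
  have hTpos : ∀ s ∈ T, 0 < β s := by
    intro s hs
    rw [hTdef] at hs
    simp only [Finset.mem_filter, Finset.mem_univ, true_and] at hs
    exact lt_of_le_of_ne (hβ s) (Ne.symm hs)
  have hTne : T.Nonempty := by
    by_contra h
    rw [Finset.not_nonempty_iff_eq_empty] at h
    have h0 := hpos ⟨0, hn⟩
    have : ∑ s, β s * (if s ⟨0, hn⟩ then E else 1) = 0 := by
      rw [← hTsub (fun s => β s * (if s ⟨0, hn⟩ then E else 1))
        (fun s hs => by simp [hs]), h, Finset.sum_empty]
    linarith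
  have key := phi_finset_le φ hadd hsmul w hw hTne β hTpos
  have e1 : (fun i => ∑ s ∈ T, β s * w s i) = (fun i => ∑ s, β s * (if s i then E else 1)) := by
    funext i
    exact hTsub (fun s => β s * w s i) (fun s hs => by simp [hs])
  have e2 : ∑ s ∈ T, β s * φ (w s) = ∑ s, β s * φ (fun i => if s i then E else 1) :=
    hTsub (fun s => β s * φ (w s)) (fun s hs => by simp [hs])
  rw [e1] at key
  rw [← e2]
  exact key

/-- for sublinear `φ : (0,∞)^n → ℝ`, the supremum over all `ε`-DP `n`-tuples
(over all dimensions) of `Φ_C(p_1,…,p_n) = Σ_{k : all p_i(k)>0} φ(p_1(k),…,p_n(k))` equals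
the value of the linear program over `S_n(ε) = {1, e^ε}^n`. -/
theorem statement7 (n : ℕ) (hn : 2 ≤ n) (ε : ℝ) (hε : 0 < ε)
    (φ : (Fin n → ℝ) → ℝ)
    (hadd : ∀ x y : Fin n → ℝ, (∀ i, 0 < x i) → (∀ i, 0 < y i) → φ (x + y) ≤ φ x + φ y)
    (hsmul : ∀ (a : ℝ) (x : Fin n → ℝ), 0 < a → (∀ i, 0 < x i) → φ (a • x) = a * φ x) :
    sSup {x : ℝ | ∃ (d : ℕ) (p : Fin n → Fin d → ℝ), IsDP ε p ∧
        x = ∑ k, if ∀ i, 0 < p i k then φ (fun i => p i k) else 0}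
    = sSup {y : ℝ | ∃ α : (Fin n → Bool) → ℝ, (∀ s, 0 ≤ α s) ∧
        (∀ i, ∑ s, α s * (if s i then Real.exp ε else 1) = 1) ∧
        y = ∑ s, α s * φ (fun i => if s i then Real.exp ε else 1)} := by
  classical
  have hn0 : 0 < n := lt_of_lt_of_le two_pos hn
  set E := Real.exp ε with hEdef
  have hE1 : 1 < E := by
    have := Real.add_one_le_exp ε
    rw [hEdef]; linarith
  have hE0 : 0 < E := lt_trans one_pos hE1
  set A := {x : ℝ | ∃ (d : ℕ) (p : Fin n → Fin d → ℝ), IsDP ε p ∧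
      x = ∑ k, if ∀ i, 0 < p i k then φ (fun i => p i k) else 0} with hAdef
  set B := {y : ℝ | ∃ α : (Fin n → Bool) → ℝ, (∀ s, 0 ≤ α s) ∧
      (∀ i, ∑ s, α s * (if s i then E else 1) = 1) ∧
      y = ∑ s, α s * φ (fun i => if s i then E else 1)} with hBdef
  have hvge1 : ∀ (s : Fin n → Bool) (i : Fin n), (1:ℝ) ≤ if s i then E else 1 := by
    intro s i; split
    · exact hE1.le
    · exact le_rfl
  have hvpos : ∀ (s : Fin n → Bool) (i : Fin n), (0:ℝ) < if s i then E else 1 :=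
    fun s i => lt_of_lt_of_le one_pos (hvge1 s i)
  -- B is nonempty
  have hBne : B.Nonempty := by
    refine ⟨_, fun s => if s = (fun _ => false) then 1 else 0, ?_, ?_, rfl⟩
    · intro s; dsimp only; split <;> norm_num
    · intro i
      dsimp only
      rw [Finset.sum_eq_single (fun _ => false : Fin n → Bool)]
      · simp
      · intro s _ hs; rw [if_neg hs]; ring
      · intro h; exact absurd (Finset.mem_univ _) h
  -- B is bounded above
  have hαle1 : ∀ (α : (Fin n → Bool) → ℝ), (∀ s, 0 ≤ α s) →
      (∀ i, ∑ s, α s * (if s i then E else 1) = 1) → ∀ s, α s ≤ 1 := by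
    intro α h0 h1 s
    have hterm : α s * (if s ⟨0, hn0⟩ then E else 1) ≤ 1 := by
      have hstep : α s * (if s ⟨0, hn0⟩ then E else 1)
          ≤ ∑ t, α t * (if t ⟨0, hn0⟩ then E else 1) :=
        Finset.single_le_sum
          (fun t _ => mul_nonneg (h0 t) (hvpos t ⟨0, hn0⟩).le) (Finset.mem_univ s)
      rw [h1 ⟨0, hn0⟩] at hstep
      exact hstep
    calc α s = α s * 1 := (mul_one _).symm
      _ ≤ α s * (if s ⟨0, hn0⟩ then E else 1) :=
          mul_le_mul_of_nonneg_left (hvge1 s ⟨0, hn0⟩) (h0 s)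
      _ ≤ 1 := hterm
  have hBbdd : BddAbove B := by
    refine ⟨∑ s : Fin n → Bool, |φ (fun i => if s i then E else 1)|, ?_⟩
    rintro y ⟨α, h0, h1, rfl⟩
    refine Finset.sum_le_sum fun s _ => ?_
    calc α s * φ (fun i => if s i then E else 1)
        ≤ α s * |φ (fun i => if s i then E else 1)| :=
          mul_le_mul_of_nonneg_left (le_abs_self _) (h0 s)
      _ ≤ 1 * |φ (fun i => if s i then E else 1)| :=
          mul_le_mul_of_nonneg_right (hαle1 α h0 h1 s) (abs_nonneg _)
      _ = _ := one_mul _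
  -- B ⊆ A
  have hBsubA : B ⊆ A := by
    rintro y ⟨α, h0, h1, rfl⟩
    set e := (Fintype.equivFin (Fin n → Bool)).symm with hedef
    refine ⟨Fintype.card (Fin n → Bool),
      fun i k => α (e k) * (if (e k) i then E else 1), ⟨?_, ?_⟩, ?_⟩
    · intro i
      constructor
      · intro k; exact mul_nonneg (h0 _) (hvpos _ _).le
      · rw [Equiv.sum_comp e (fun s => α s * (if s i then E else 1))]
        exact h1 i
    · intro i j k
      have hv : (if (e k) i then E else 1) ≤ E * (if (e k) j then E else 1) := by
        rcases Bool.eq_false_or_eq_true ((e k) i) with hi | hi <;>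
          rcases Bool.eq_false_or_eq_true ((e k) j) with hj | hj <;>
            simp [hi, hj] <;> nlinarith
      calc α (e k) * (if (e k) i then E else 1)
          ≤ α (e k) * (E * (if (e k) j then E else 1)) :=
            mul_le_mul_of_nonneg_left hv (h0 _)
        _ = E * (α (e k) * (if (e k) j then E else 1)) := by ring
    · dsimp only
      refine Eq.symm ?_
      calc ∑ k, (if ∀ i, 0 < α (e k) * (if (e k) i then E else 1)
            then φ (fun i => α (e k) * (if (e k) i then E else 1)) else 0)
          = ∑ k, α (e k) * φ (fun i => if (e k) i then E else 1) := by
            refine Finset.sum_congr rfl fun k _ => ?_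
            rcases (h0 (e k)).lt_or_eq with hpos | hzero
            · rw [if_pos (fun i => mul_pos hpos (hvpos _ i))]
              exact hsmul (α (e k)) _ hpos (hvpos (e k))
            · rw [if_neg, ← hzero, zero_mul]
              intro hcon
              have hcc := hcon ⟨0, hn0⟩
              rw [← hzero, zero_mul] at hcc
              exact lt_irrefl 0 hcc
        _ = ∑ s, α s * φ (fun i => if s i then E else 1) :=
            Equiv.sum_comp e (fun s => α s * φ (fun i => if s i then E else 1))
  -- every element of A is ≤ sSup B
  have hAle : ∀ a ∈ A, a ≤ sSup B := by
    rintro a ⟨d, p, hDP, rfl⟩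
    have hzero : ∀ k, ¬(∀ i, 0 < p i k) → ∀ i, p i k = 0 := by
      intro k hk i
      push_neg at hk
      obtain ⟨j, hj⟩ := hk
      have hj0 : p j k = 0 := le_antisymm hj ((hDP.1 j).1 k)
      have h1 : p i k ≤ E * p j k := hDP.2 i j k
      rw [hj0, mul_zero] at h1
      exact le_antisymm h1 ((hDP.1 i).1 k)
    have hdec : ∀ k, ∃ β : (Fin n → Bool) → ℝ, (∀ s, 0 ≤ β s) ∧
        ∀ i, ∑ s, β s * (if s i then E else 1) = if (∀ i', 0 < p i' k) then p i k else 0 := by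
      intro k
      by_cases hk : ∀ i', 0 < p i' k
      · obtain ⟨β, hb1, hb2⟩ := decomp_dp hn0 hE1 (fun i => p i k) hk
          (fun i j => hDP.2 i j k)
        exact ⟨β, hb1, fun i => by rw [if_pos hk]; exact hb2 i⟩
      · exact ⟨0, fun s => le_rfl, fun i => by simp [hk]⟩
    choose β hβ0 hβsum using hdec
    set α : (Fin n → Bool) → ℝ := fun s => ∑ k, β k s with hαdef
    have hα0 : ∀ s, 0 ≤ α s := fun s => Finset.sum_nonneg fun k _ => hβ0 k s
    have hαfeas : ∀ i, ∑ s, α s * (if s i then E else 1) = 1 := by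
      intro i
      calc ∑ s, α s * (if s i then E else 1)
          = ∑ s, ∑ k, β k s * (if s i then E else 1) := by
            refine Finset.sum_congr rfl fun s _ => ?_
            rw [hαdef]; exact Finset.sum_mul _ _ _
        _ = ∑ k, ∑ s, β k s * (if s i then E else 1) := Finset.sum_comm
        _ = ∑ k, (if (∀ i', 0 < p i' k) then p i k else 0) :=
            Finset.sum_congr rfl fun k _ => hβsum k i
        _ = ∑ k, p i k := by
            refine Finset.sum_congr rfl fun k _ => ?_
            split
            · rfl
            · rename_i hk
              exact (hzero k hk i).symm
        _ = 1 := (hDP.1 i).2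
    have hval : (∑ k, if ∀ i, 0 < p i k then φ (fun i => p i k) else 0)
        ≤ ∑ s, α s * φ (fun i => if s i then E else 1) := by
      have hstep : ∀ k, (if ∀ i, 0 < p i k then φ (fun i => p i k) else 0)
          ≤ ∑ s, β k s * φ (fun i => if s i then E else 1) := by
        intro k
        by_cases hk : ∀ i, 0 < p i k
        · rw [if_pos hk]
          have hpos : ∀ i, 0 < ∑ s, β k s * (if s i then E else 1) := by
            intro i; rw [hβsum k i, if_pos hk]; exact hk i
          have key := phi_le_sum hn0 φ hadd hsmul hE0 (β k) (hβ0 k) hpos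
          have harg : (fun i => ∑ s, β k s * (if s i then E else 1))
              = fun i => p i k := by
            funext i; rw [hβsum k i, if_pos hk]
          rw [harg] at key
          exact key
        · rw [if_neg hk]
          have hb0 : ∀ s, β k s = 0 := by
            intro s
            have hs := hβsum k ⟨0, hn0⟩
            rw [if_neg hk] at hs
            have := (Finset.sum_eq_zero_iff_of_nonneg
              (fun t _ => mul_nonneg (hβ0 k t) (hvpos t ⟨0, hn0⟩).le)).mp hs s
              (Finset.mem_univ s)
            have hv := hvpos s ⟨0, hn0⟩
            rcases mul_eq_zero.mp this with h | h
            · exact h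
            · exact absurd h hv.ne'
          refine le_of_eq (Finset.sum_eq_zero fun s _ => ?_).symm
          rw [hb0 s, zero_mul]
      calc (∑ k, if ∀ i, 0 < p i k then φ (fun i => p i k) else 0)
          ≤ ∑ k, ∑ s, β k s * φ (fun i => if s i then E else 1) :=
            Finset.sum_le_sum fun k _ => hstep k
        _ = ∑ s, ∑ k, β k s * φ (fun i => if s i then E else 1) := Finset.sum_comm
        _ = ∑ s, α s * φ (fun i => if s i then E else 1) := by
            refine Finset.sum_congr rfl fun s _ => ?_
            rw [hαdef]; exact (Finset.sum_mul _ _ _).symm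
    refine le_trans hval (le_csSup hBbdd ?_)
    exact ⟨α, hα0, hαfeas, rfl⟩
  have hAne : A.Nonempty := hBne.mono hBsubA
  have hAbdd : BddAbove A := ⟨sSup B, fun a ha => hAle a ha⟩
  exact le_antisymm (csSup_le hAne hAle) (csSup_le_csSup hAbdd hBne hBsubA)

end
end
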